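/- arXiv:1502.02738 — 8 statements merged into one kernel-verified Lean document; each statement's English description precedes it below -/
import Mathlib

section
/- Let M_ρ be the smallest mode of the probability mass function f(x) = ρ^x ∏_{j=0}^∞ (1 - ρ^{x+1+j}) on ℕ, for ρ ∈ (0,1). Then M_ρ · ln ρ / ln(1-ρ) → 1 as ρ → 1⁻. -/
open Filter Set

private lemma factor_pos {ρ : ℝ} (hρ0 : 0 < ρ) (hρ1 : ρ < 1) (x j : ℕ) :
    0 < 1 - ρ ^ (x + 1 + j) := by
  have : ρ ^ (x + 1 + j) < 1 := pow_lt_one₀ hρ0.le hρ1 (by omega)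
  linarith

private lemma log_summable {ρ : ℝ} (hρ0 : 0 < ρ) (hρ1 : ρ < 1) (x : ℕ) :
    Summable fun j : ℕ => Real.log (1 - ρ ^ (x + 1 + j)) := by
  rw [← summable_neg_iff]
  have hb : Summable fun j : ℕ => ρ ^ (x + 1 + j) / (1 - ρ) := by
    have hg : Summable fun j : ℕ => (ρ ^ (x + 1) / (1 - ρ)) * ρ ^ j :=
      (summable_geometric_of_lt_one hρ0.le hρ1).mul_left _
    refine hg.congr fun j => ?_
    rw [pow_add]; ring
  refine Summable.of_nonneg_of_le (fun j => ?_) (fun j => ?_) hb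
  · have h1 : 1 - ρ ^ (x + 1 + j) ≤ 1 := by
      have : 0 < ρ ^ (x + 1 + j) := pow_pos hρ0 _
      linarith
    have := Real.log_nonpos (le_of_lt (factor_pos hρ0 hρ1 x j)) h1
    linarith
  · set t : ℝ := 1 - ρ ^ (x + 1 + j) with ht
    have htpos : 0 < t := factor_pos hρ0 hρ1 x j
    have h1 : -Real.log t = Real.log t⁻¹ := by rw [Real.log_inv]
    have h2 : Real.log t⁻¹ ≤ t⁻¹ - 1 :=
      Real.log_le_sub_one_of_pos (inv_pos.mpr htpos)
    have h3 : t⁻¹ - 1 = ρ ^ (x + 1 + j) / t := by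
      rw [ht, inv_eq_one_div, div_sub_one (factor_pos hρ0 hρ1 x j).ne']; ring
    have h4 : ρ ^ (x + 1 + j) / t ≤ ρ ^ (x + 1 + j) / (1 - ρ) := by
      have hρk : ρ ^ (x + 1 + j) ≤ ρ := by
        have := pow_le_pow_of_le_one hρ0.le hρ1.le (show 1 ≤ x + 1 + j by omega)
        simpa using this
      exact div_le_div_of_nonneg_left (pow_pos hρ0 _).le (by linarith) (by rw [ht]; linarith)
    linarith

private lemma tprod_pos {ρ : ℝ} (hρ0 : 0 < ρ) (hρ1 : ρ < 1) (x : ℕ) :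
    0 < ∏' j : ℕ, (1 - ρ ^ (x + 1 + j)) := by
  have h2 : Real.exp _ = ∏' j : ℕ, (1 - ρ ^ (x + 1 + j)) :=
    Real.rexp_tsum_eq_tprod (f := fun j : ℕ => 1 - ρ ^ (x + 1 + j))
      (fun j => factor_pos hρ0 hρ1 x j) (log_summable hρ0 hρ1 x)
  rw [← h2]
  exact Real.exp_pos _

private lemma tail_multipliable {ρ : ℝ} (hρ0 : 0 < ρ) (hρ1 : ρ < 1) (x : ℕ) :
    Multipliable fun j : ℕ => 1 - ρ ^ (x + 1 + j) :=
  Real.multipliable_of_summable_log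
    (fun j => factor_pos hρ0 hρ1 x j) (log_summable hρ0 hρ1 x)

private lemma tprod_split {ρ : ℝ} (hρ0 : 0 < ρ) (hρ1 : ρ < 1) (x : ℕ) :
    (∏' j : ℕ, (1 - ρ ^ (x + 1 + j)))
      = (1 - ρ ^ (x + 1)) * ∏' j : ℕ, (1 - ρ ^ (x + 1 + 1 + j)) := by
  have hshift : (fun n : ℕ => 1 - ρ ^ (x + 1 + (n + 1)))
      = fun n : ℕ => 1 - ρ ^ (x + 1 + 1 + n) := by
    funext n
    rw [show x + 1 + (n + 1) = x + 1 + 1 + n from by omega]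
  have hm : Multipliable fun n : ℕ => (fun j : ℕ => 1 - ρ ^ (x + 1 + j)) (n + 1) := by
    simpa [hshift] using tail_multipliable hρ0 hρ1 (x + 1)
  have h := tprod_eq_zero_mul' (f := fun j : ℕ => 1 - ρ ^ (x + 1 + j)) hm
  simpa [hshift] using h

theorem mode_asymptotic
    (f : ℝ → ℕ → ℝ)
    (hf : ∀ ρ x, f ρ x = ρ ^ x * ∏' j : ℕ, (1 - ρ ^ (x + 1 + j)))
    (M : ℝ → ℕ)
    (hM : ∀ ρ ∈ Set.Ioo (0:ℝ) 1, IsLeast {x : ℕ | ∀ n : ℕ, f ρ n ≤ f ρ x} (M ρ)) :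
    Tendsto (fun ρ => (M ρ : ℝ) * Real.log ρ / Real.log (1 - ρ))
      (nhdsWithin 1 (Set.Iio 1)) (nhds 1) := by
  -- pointwise bounds
  have hbound : ∀ ρ ∈ Set.Ioo (0:ℝ) 1,
      1 - Real.log ρ / Real.log (1 - ρ) ≤ (M ρ : ℝ) * Real.log ρ / Real.log (1 - ρ) ∧
      (M ρ : ℝ) * Real.log ρ / Real.log (1 - ρ) ≤ 1 := by
    intro ρ hρ
    obtain ⟨hρ0, hρ1⟩ := hρ
    obtain ⟨hmode, hleast⟩ := hM ρ ⟨hρ0, hρ1⟩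
    set m := M ρ with hm
    -- positivity of f
    have hfpos : ∀ x : ℕ, 0 < f ρ x := by
      intro x
      rw [hf]
      exact mul_pos (pow_pos hρ0 x) (tprod_pos hρ0 hρ1 x)
    -- recursion : f ρ (x+1) * (1 - ρ^(x+1)) = ρ * f ρ x
    have hrec : ∀ x : ℕ, f ρ (x + 1) * (1 - ρ ^ (x + 1)) = ρ * f ρ x := by
      intro x
      rw [hf, hf, tprod_split hρ0 hρ1 x]
      ring
    have hlogρ : Real.log ρ < 0 := Real.log_neg hρ0 hρ1
    have hlog1ρ : Real.log (1 - ρ) < 0 := Real.log_neg (by linarith) (by linarith)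
    -- key1 : ρ^(m+1) ≤ 1 - ρ
    have key1 : ρ ^ (m + 1) ≤ 1 - ρ := by
      have hle : f ρ (m + 1) ≤ f ρ m := hmode (m + 1)
      have hnn : 0 ≤ 1 - ρ ^ (m + 1) := by
        simpa using (factor_pos hρ0 hρ1 m 0).le
      have h2 : ρ * f ρ m ≤ (1 - ρ ^ (m + 1)) * f ρ m := by
        calc ρ * f ρ m = f ρ (m + 1) * (1 - ρ ^ (m + 1)) := (hrec m).symm
          _ ≤ f ρ m * (1 - ρ ^ (m + 1)) := mul_le_mul_of_nonneg_right hle hnn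
          _ = (1 - ρ ^ (m + 1)) * f ρ m := by ring
      have := le_of_mul_le_mul_right h2 (hfpos m)
      linarith
    -- key2 : log(1-ρ) ≤ m * log ρ
    have key2 : Real.log (1 - ρ) ≤ (m : ℝ) * Real.log ρ := by
      rcases Nat.eq_zero_or_pos m with h0 | hpos
      · rw [h0]; push_cast; linarith
      · obtain ⟨k, hk⟩ := Nat.exists_eq_add_of_le hpos
        have hmk : m = k + 1 := by omega
        -- show 1 - ρ < ρ ^ m
        have hlt : 1 - ρ < ρ ^ m := by
          by_contra hcon
          push_neg at hcon
          have hge : ρ ≤ 1 - ρ ^ m := by linarith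
          have hr : f ρ m * (1 - ρ ^ m) = ρ * f ρ k := by
            have := hrec k; rwa [← hmk] at this
          have h2 : ρ * f ρ m ≤ ρ * f ρ k := by
            calc ρ * f ρ m ≤ (1 - ρ ^ m) * f ρ m :=
                  mul_le_mul_of_nonneg_right hge (hfpos m).le
              _ = f ρ m * (1 - ρ ^ m) := by ring
              _ = ρ * f ρ k := hr
          have hfk : f ρ m ≤ f ρ k := le_of_mul_le_mul_left h2 hρ0
          have hkmem : k ∈ {x : ℕ | ∀ n : ℕ, f ρ n ≤ f ρ x} :=
            fun n => (hmode n).trans hfk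
          have := hleast hkmem
          omega
        have := Real.log_lt_log (by linarith) hlt
        rw [Real.log_pow] at this
        linarith
    constructor
    · -- lower bound, from key1
      have hlog : ((m : ℝ) + 1) * Real.log ρ ≤ Real.log (1 - ρ) := by
        have := Real.log_le_log (pow_pos hρ0 (m + 1)) key1
        rwa [Real.log_pow, Nat.cast_add, Nat.cast_one] at this
      have h1 : (1 : ℝ) ≤ ((m : ℝ) + 1) * Real.log ρ / Real.log (1 - ρ) := by
        rw [le_div_iff_of_neg hlog1ρ]
        linarith
      have heq : ((m : ℝ) + 1) * Real.log ρ / Real.log (1 - ρ)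
          = (m : ℝ) * Real.log ρ / Real.log (1 - ρ) + Real.log ρ / Real.log (1 - ρ) := by
        ring
      rw [heq] at h1
      linarith
    · -- upper bound, from key2
      rw [div_le_iff_of_neg hlog1ρ]
      linarith
  -- limit of the lower bound function
  have hlow : Tendsto (fun ρ : ℝ => 1 - Real.log ρ / Real.log (1 - ρ))
      (nhdsWithin 1 (Set.Iio 1)) (nhds 1) := by
    have hnum : Tendsto (fun ρ : ℝ => Real.log ρ) (nhdsWithin 1 (Set.Iio 1)) (nhds 0) := by
      have := (Real.continuousAt_log (one_ne_zero)).tendsto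
      rw [Real.log_one] at this
      exact this.mono_left nhdsWithin_le_nhds
    have hsub : Tendsto (fun ρ : ℝ => 1 - ρ) (nhdsWithin 1 (Set.Iio 1))
        (nhdsWithin 0 (Set.Ioi 0)) := by
      apply tendsto_nhdsWithin_of_tendsto_nhds_of_eventually_within
      · have : Tendsto (fun ρ : ℝ => 1 - ρ) (nhds 1) (nhds (1 - 1)) :=
          (continuous_const.sub continuous_id).tendsto 1
        simpa using this.mono_left nhdsWithin_le_nhds
      · filter_upwards [self_mem_nhdsWithin] with ρ hρ
        simp only [Set.mem_Iio] at hρ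
        simp only [Set.mem_Ioi]
        linarith
    have hden : Tendsto (fun ρ : ℝ => Real.log (1 - ρ)) (nhdsWithin 1 (Set.Iio 1)) atBot :=
      Real.tendsto_log_nhdsGT_zero.comp hsub
    have hnegtop : Tendsto (fun ρ : ℝ => -Real.log (1 - ρ)) (nhdsWithin 1 (Set.Iio 1)) atTop :=
      tendsto_neg_atBot_atTop.comp hden
    have hinv : Tendsto (fun ρ : ℝ => (Real.log (1 - ρ))⁻¹)
        (nhdsWithin 1 (Set.Iio 1)) (nhds 0) := by
      have h := hnegtop.inv_tendsto_atTop.neg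
      simp only [Pi.inv_apply, neg_neg, inv_neg, neg_zero] at h
      exact h
    have hquot : Tendsto (fun ρ : ℝ => Real.log ρ / Real.log (1 - ρ))
        (nhdsWithin 1 (Set.Iio 1)) (nhds 0) := by
      have := hnum.mul hinv
      simpa [div_eq_mul_inv] using this
    have := hquot.const_sub 1
    simpa using this
  -- squeeze
  apply tendsto_of_tendsto_of_tendsto_of_le_of_le' hlow tendsto_const_nhds
  · filter_upwards [Ioo_mem_nhdsLT_of_mem (show (1:ℝ) ∈ Set.Ioc 0 1 by norm_num)] with ρ hρ
    exact (hbound ρ hρ).1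
  · filter_upwards [Ioo_mem_nhdsLT_of_mem (show (1:ℝ) ∈ Set.Ioc 0 1 by norm_num)] with ρ hρ
    exact (hbound ρ hρ).2
end

section
/- For 0 < ρ < 1 and real t with e^t ρ < 1, the moment generating function of the distribution with mass function f(x) = ρ^x ∏_{j=0}^∞ (1 - ρ^{x+1+j}) on ℕ equals ∏_{k=1}^∞ (1 - ρ^k)/(1 - e^t ρ^k); that is, ∑_{x=0}^∞ e^{tx} ρ^x ∏_{j=0}^∞ (1 - ρ^{x+1+j}) = ∏_{k=1}^∞ (1 - ρ^k)/(1 - e^t ρ^k). -/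
set_option maxHeartbeats 1000000

open Real Filter Topology

/-- Summability of logs of the factors. -/
lemma frog_log_summable {q c : ℝ} (hq0 : 0 < q) (hq1 : q < 1) (hc0 : 0 ≤ c) (hc1 : c < 1) :
    Summable fun k : ℕ => Real.log (1 - c * q ^ k) := by
  have hgeo : Summable fun k : ℕ => (1 - c)⁻¹ * (c * q ^ k) :=
    (((summable_geometric_of_lt_one hq0.le hq1).mul_left c).mul_left _)
  refine Summable.of_norm_bounded hgeo fun k => ?_
  have hqk1 : q ^ k ≤ 1 := pow_le_one₀ hq0.le hq1.le
  have hqk0 : 0 < q ^ k := pow_pos hq0 k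
  have ha0 : 0 ≤ c * q ^ k := by positivity
  have hac : c * q ^ k ≤ c := by nlinarith
  have h1 : 0 < 1 - c * q ^ k := by linarith
  have h1c : 0 < 1 - c := by linarith
  rw [Real.norm_eq_abs, abs_of_nonpos (Real.log_nonpos (by linarith) (by linarith)),
    ← Real.log_inv]
  calc Real.log (1 - c * q ^ k)⁻¹ ≤ (1 - c * q ^ k)⁻¹ - 1 :=
        Real.log_le_sub_one_of_pos (inv_pos.2 h1)
    _ = (c * q ^ k) / (1 - c * q ^ k) := by
        rw [eq_div_iff h1.ne']; field_simp; ring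
    _ ≤ (c * q ^ k) / (1 - c) := by gcongr
    _ = (1 - c)⁻¹ * (c * q ^ k) := by ring

lemma frog_factor_pos {q c : ℝ} (hq0 : 0 < q) (hq1 : q < 1) (hc0 : 0 ≤ c) (hc1 : c < 1)
    (k : ℕ) : 0 < 1 - c * q ^ k := by
  have hqk1 : q ^ k ≤ 1 := pow_le_one₀ hq0.le hq1.le
  nlinarith

lemma frog_tprod_eq_exp {q c : ℝ} (hq0 : 0 < q) (hq1 : q < 1) (hc0 : 0 ≤ c) (hc1 : c < 1) :
    (∏' k : ℕ, (1 - c * q ^ k)) = Real.exp (∑' k : ℕ, Real.log (1 - c * q ^ k)) := by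
  have := Real.rexp_tsum_eq_tprod (f := fun k => 1 - c * q ^ k)
    (fun k => frog_factor_pos hq0 hq1 hc0 hc1 k)
    (frog_log_summable hq0 hq1 hc0 hc1)
  exact this.symm

lemma frog_tprod_pos {q c : ℝ} (hq0 : 0 < q) (hq1 : q < 1) (hc0 : 0 ≤ c) (hc1 : c < 1) :
    0 < ∏' k : ℕ, (1 - c * q ^ k) := by
  rw [frog_tprod_eq_exp hq0 hq1 hc0 hc1]; exact Real.exp_pos _

lemma frog_tprod_le_one {q c : ℝ} (hq0 : 0 < q) (hq1 : q < 1) (hc0 : 0 ≤ c) (hc1 : c < 1) :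
    (∏' k : ℕ, (1 - c * q ^ k)) ≤ 1 := by
  rw [frog_tprod_eq_exp hq0 hq1 hc0 hc1, Real.exp_le_one_iff]
  refine tsum_nonpos fun k => ?_
  have hqk1 : q ^ k ≤ 1 := pow_le_one₀ hq0.le hq1.le
  have ha0 : 0 ≤ c * q ^ k := mul_nonneg hc0 (pow_pos hq0 k).le
  have := frog_factor_pos hq0 hq1 hc0 hc1 k
  exact Real.log_nonpos (by linarith) (by linarith)

lemma frog_multipliable {q c : ℝ} (hq0 : 0 < q) (hq1 : q < 1) (hc0 : 0 ≤ c) (hc1 : c < 1) :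
    Multipliable fun k : ℕ => (1 - c * q ^ k) := by
  have h : Multipliable (Real.exp ∘ fun k : ℕ => Real.log (1 - c * q ^ k)) :=
    ⟨_, (frog_log_summable hq0 hq1 hc0 hc1).hasSum.rexp⟩
  exact h.congr fun k => Real.exp_log (frog_factor_pos hq0 hq1 hc0 hc1 k)

lemma frog_peel {q c : ℝ} (hq0 : 0 < q) (hq1 : q < 1) (hc0 : 0 ≤ c) (hc1 : c < 1) :
    (∏' k : ℕ, (1 - c * q ^ k)) = (1 - c) * ∏' k : ℕ, (1 - (c * q) * q ^ k) := by
  have hcq0 : 0 ≤ c * q := by positivity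
  have hcq1 : c * q < 1 := by nlinarith
  have hshift : (fun k : ℕ => 1 - c * q ^ (k + 1)) = fun k : ℕ => 1 - (c * q) * q ^ k := by
    funext k; rw [pow_succ]; ring
  have hm : Multipliable fun k : ℕ => (1 - c * q ^ (k + 1)) := by
    rw [hshift]; exact frog_multipliable hq0 hq1 hcq0 hcq1
  rw [tprod_eq_zero_mul' hm, pow_zero, mul_one, hshift]

noncomputable def frogP (q : ℝ) (x : ℕ) : ℝ := ∏' j : ℕ, (1 - q ^ (x + 1 + j))

lemma frogP_eq {q : ℝ} (x : ℕ) : frogP q x = ∏' j : ℕ, (1 - q ^ (x + 1) * q ^ j) :=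
  tprod_congr fun j => by rw [← pow_add]

section
variable {q : ℝ} (hq0 : 0 < q) (hq1 : q < 1)
include hq0 hq1

lemma frogP_c0 (x : ℕ) : (0:ℝ) ≤ q ^ (x + 1) := (pow_pos hq0 _).le

lemma frogP_c1 (x : ℕ) : q ^ (x + 1) < 1 :=
  pow_lt_one₀ hq0.le hq1 (Nat.succ_ne_zero x)

lemma frogP_pos (x : ℕ) : 0 < frogP q x := by
  rw [frogP_eq]; exact frog_tprod_pos hq0 hq1 (frogP_c0 hq0 hq1 x) (frogP_c1 hq0 hq1 x)

lemma frogP_le_one (x : ℕ) : frogP q x ≤ 1 := by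
  rw [frogP_eq]; exact frog_tprod_le_one hq0 hq1 (frogP_c0 hq0 hq1 x) (frogP_c1 hq0 hq1 x)

lemma frogP_peel (x : ℕ) : frogP q x = (1 - q ^ (x + 1)) * frogP q (x + 1) := by
  rw [frogP_eq x, frogP_eq (x + 1),
    frog_peel hq0 hq1 (frogP_c0 hq0 hq1 x) (frogP_c1 hq0 hq1 x)]
  congr 1


lemma frogT_summable {w : ℝ} (hw0 : 0 ≤ w) (hw1 : w < 1) :
    Summable fun x : ℕ => w ^ x * frogP q x := by
  refine Summable.of_nonneg_of_le
    (fun x => mul_nonneg (pow_nonneg hw0 x) (frogP_pos hq0 hq1 x).le)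
    (fun x => ?_) (summable_geometric_of_lt_one hw0 hw1)
  calc w ^ x * frogP q x ≤ w ^ x * 1 :=
        mul_le_mul_of_nonneg_left (frogP_le_one hq0 hq1 x) (pow_nonneg hw0 x)
    _ = w ^ x := mul_one _

/-- Functional equation. -/
lemma frog_step {w : ℝ} (hw0 : 0 ≤ w) (hw1 : w < 1) :
    (1 - w) * ∑' x : ℕ, w ^ x * frogP q x = ∑' x : ℕ, (w * q) ^ x * frogP q x := by
  have hwq0 : 0 ≤ w * q := mul_nonneg hw0 hq0.le
  have hwq1 : w * q < 1 := by nlinarith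
  have hT : Summable fun x : ℕ => w ^ x * frogP q x := frogT_summable hq0 hq1 hw0 hw1
  have hT1 : Summable fun x : ℕ => w ^ (x + 1) * frogP q (x + 1) :=
    (summable_nat_add_iff 1).2 hT
  have hT2 : Summable fun x : ℕ => w ^ (x + 1) * frogP q x := by
    have := hT.mul_left w
    refine this.congr fun x => ?_
    rw [pow_succ']; ring
  have hT3 : Summable fun x : ℕ => (w * q) ^ x * frogP q x :=
    frogT_summable hq0 hq1 hwq0 hwq1
  have hT4 : Summable fun x : ℕ => (w * q) ^ (x + 1) * frogP q (x + 1) :=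
    (summable_nat_add_iff 1).2 hT3
  have e1 : (∑' x : ℕ, w ^ x * frogP q x) =
      frogP q 0 + ∑' x : ℕ, w ^ (x + 1) * frogP q (x + 1) := by
    rw [Summable.tsum_eq_zero_add hT, pow_zero, one_mul]
  have e2 : w * ∑' x : ℕ, w ^ x * frogP q x = ∑' x : ℕ, w ^ (x + 1) * frogP q x := by
    rw [← tsum_mul_left]
    exact tsum_congr fun x => by rw [pow_succ']; ring
  have e3 : (∑' x : ℕ, (w * q) ^ x * frogP q x) =
      frogP q 0 + ∑' x : ℕ, (w * q) ^ (x + 1) * frogP q (x + 1) := by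
    rw [Summable.tsum_eq_zero_add hT3, pow_zero, one_mul]
  have key : ∀ x : ℕ, w ^ (x + 1) * frogP q (x + 1) - w ^ (x + 1) * frogP q x =
      (w * q) ^ (x + 1) * frogP q (x + 1) := by
    intro x
    rw [frogP_peel hq0 hq1 x, mul_pow]
    ring
  calc (1 - w) * ∑' x : ℕ, w ^ x * frogP q x
      = (∑' x : ℕ, w ^ x * frogP q x) - w * ∑' x : ℕ, w ^ x * frogP q x := by ring
    _ = frogP q 0 + ((∑' x : ℕ, w ^ (x + 1) * frogP q (x + 1)) -
          ∑' x : ℕ, w ^ (x + 1) * frogP q x) := by rw [e2, e1]; ring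
    _ = frogP q 0 + ∑' x : ℕ, (w ^ (x + 1) * frogP q (x + 1) - w ^ (x + 1) * frogP q x) := by
          rw [Summable.tsum_sub hT1 hT2]
    _ = frogP q 0 + ∑' x : ℕ, (w * q) ^ (x + 1) * frogP q (x + 1) := by
          rw [tsum_congr key]
    _ = ∑' x : ℕ, (w * q) ^ x * frogP q x := e3.symm

end

lemma tprod_eq_exp_general (f : ℕ → ℝ) (hf : ∀ n, 0 < f n)
    (h : Summable fun n => Real.log (f n)) :
    ∏' n : ℕ, f n = Real.exp (∑' n : ℕ, Real.log (f n)) := by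
  have := Real.rexp_tsum_eq_tprod (f := fun n => f n) (fun n => hf n) h
  exact this.symm

section
variable {q z : ℝ} (hq0 : 0 < q) (hq1 : q < 1) (hz0 : 0 ≤ z) (hz1 : z < 1)
include hq0 hq1 hz0 hz1

lemma frog_iter (N : ℕ) :
    (∏ k ∈ Finset.range N, (1 - z * q ^ k)) * (∑' x : ℕ, z ^ x * frogP q x) =
      ∑' x : ℕ, (z * q ^ N) ^ x * frogP q x := by
  induction N with
  | zero => simp
  | succ N ih =>
    have hqN1 : q ^ N ≤ 1 := pow_le_one₀ hq0.le hq1.le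
    have hqN0 : 0 < q ^ N := pow_pos hq0 N
    have hw0 : 0 ≤ z * q ^ N := mul_nonneg hz0 hqN0.le
    have hw1 : z * q ^ N < 1 := by nlinarith
    have hbase : (z * q ^ N) * q = z * q ^ (N + 1) := by rw [pow_succ]; ring
    calc (∏ k ∈ Finset.range (N + 1), (1 - z * q ^ k)) * (∑' x : ℕ, z ^ x * frogP q x)
        = (1 - z * q ^ N) * ((∏ k ∈ Finset.range N, (1 - z * q ^ k)) *
            (∑' x : ℕ, z ^ x * frogP q x)) := by rw [Finset.prod_range_succ]; ring
      _ = (1 - z * q ^ N) * ∑' x : ℕ, (z * q ^ N) ^ x * frogP q x := by rw [ih]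
      _ = ∑' x : ℕ, ((z * q ^ N) * q) ^ x * frogP q x := frog_step hq0 hq1 hw0 hw1
      _ = ∑' x : ℕ, (z * q ^ (N + 1)) ^ x * frogP q x := by rw [hbase]

open Filter in
lemma frog_main :
    (∑' x : ℕ, z ^ x * frogP q x) =
      frogP q 0 / ∏' k : ℕ, (1 - z * q ^ k) := by
  have hQpos : 0 < ∏' k : ℕ, (1 - z * q ^ k) := frog_tprod_pos hq0 hq1 hz0 hz1
  have h1z : 0 < 1 - z := by linarith
  have lim1 : Tendsto (fun N => (∏ k ∈ Finset.range N, (1 - z * q ^ k)) *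
      (∑' x : ℕ, z ^ x * frogP q x)) atTop
      (𝓝 ((∏' k : ℕ, (1 - z * q ^ k)) * ∑' x : ℕ, z ^ x * frogP q x)) :=
    ((frog_multipliable hq0 hq1 hz0 hz1).hasProd.tendsto_prod_nat).mul_const _
  -- bounds on T (z * q ^ N)
  have hw0 : ∀ N : ℕ, 0 ≤ z * q ^ N := fun N => mul_nonneg hz0 (pow_pos hq0 N).le
  have hwz : ∀ N : ℕ, z * q ^ N ≤ z := by
    intro N
    have hqN1 : q ^ N ≤ 1 := pow_le_one₀ hq0.le hq1.le
    nlinarith [pow_pos hq0 N]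
  have hw1 : ∀ N : ℕ, z * q ^ N < 1 := fun N => lt_of_le_of_lt (hwz N) hz1
  have hlow : ∀ N : ℕ, frogP q 0 ≤ ∑' x : ℕ, (z * q ^ N) ^ x * frogP q x := by
    intro N
    have hT := frogT_summable hq0 hq1 (hw0 N) (hw1 N)
    have := Summable.le_tsum hT 0 (fun i _ =>
      mul_nonneg (pow_nonneg (hw0 N) i) (frogP_pos hq0 hq1 i).le)
    simpa using this
  have hup : ∀ N : ℕ, (∑' x : ℕ, (z * q ^ N) ^ x * frogP q x) ≤
      frogP q 0 + (1 - z)⁻¹ * (z * q ^ N) := by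
    intro N
    set w := z * q ^ N with hw
    have hT := frogT_summable hq0 hq1 (hw0 N) (hw1 N)
    have hT1 : Summable fun x : ℕ => w ^ (x + 1) * frogP q (x + 1) :=
      (summable_nat_add_iff 1).2 hT
    have hg : Summable fun x : ℕ => w ^ (x + 1) := by
      have := (summable_geometric_of_lt_one (hw0 N) (hw1 N)).mul_left w
      refine this.congr fun x => ?_
      rw [pow_succ']
    have h1w : 0 < 1 - w := by linarith [hw1 N]
    rw [Summable.tsum_eq_zero_add hT, pow_zero, one_mul]
    have step1 : (∑' x : ℕ, w ^ (x + 1) * frogP q (x + 1)) ≤ ∑' x : ℕ, w ^ (x + 1) := by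
      refine Summable.tsum_le_tsum (fun x => ?_) hT1 hg
      calc w ^ (x + 1) * frogP q (x + 1) ≤ w ^ (x + 1) * 1 :=
            mul_le_mul_of_nonneg_left (frogP_le_one hq0 hq1 (x + 1))
              (pow_nonneg (hw0 N) (x + 1))
        _ = w ^ (x + 1) := mul_one _
    have step2 : (∑' x : ℕ, w ^ (x + 1)) = w * (1 - w)⁻¹ := by
      rw [show (fun x : ℕ => w ^ (x + 1)) = fun x : ℕ => w * w ^ x from
        funext fun x => by rw [pow_succ'], tsum_mul_left,
        tsum_geometric_of_lt_one (hw0 N) (hw1 N)]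
    have hinv : (1 - w)⁻¹ ≤ (1 - z)⁻¹ := by
      gcongr
      exact hwz N
    have step3 : w * (1 - w)⁻¹ ≤ (1 - z)⁻¹ * w :=
      calc w * (1 - w)⁻¹ ≤ w * (1 - z)⁻¹ := mul_le_mul_of_nonneg_left hinv (hw0 N)
        _ = (1 - z)⁻¹ * w := mul_comm _ _
    linarith [step1, step2 ▸ step1, step3]
  have limw : Tendsto (fun N : ℕ => z * q ^ N) atTop (𝓝 0) := by
    have := (tendsto_pow_atTop_nhds_zero_of_lt_one hq0.le hq1).const_mul z
    simpa using this
  have limup : Tendsto (fun N : ℕ => frogP q 0 + (1 - z)⁻¹ * (z * q ^ N)) atTop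
      (𝓝 (frogP q 0)) := by
    have h := (tendsto_const_nhds (α := ℕ) (x := frogP q 0)).add
      (limw.const_mul ((1 - z)⁻¹))
    simpa [mul_comm] using h
  have lim2 : Tendsto (fun N : ℕ => ∑' x : ℕ, (z * q ^ N) ^ x * frogP q x) atTop
      (𝓝 (frogP q 0)) :=
    tendsto_of_tendsto_of_tendsto_of_le_of_le tendsto_const_nhds limup hlow hup
  have lim1' : Tendsto (fun N : ℕ => ∑' x : ℕ, (z * q ^ N) ^ x * frogP q x) atTop
      (𝓝 ((∏' k : ℕ, (1 - z * q ^ k)) * ∑' x : ℕ, z ^ x * frogP q x)) :=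
    lim1.congr fun N => frog_iter hq0 hq1 hz0 hz1 N
  have key : (∏' k : ℕ, (1 - z * q ^ k)) * (∑' x : ℕ, z ^ x * frogP q x) = frogP q 0 :=
    tendsto_nhds_unique lim1' lim2
  rw [eq_div_iff hQpos.ne', mul_comm]
  exact key

lemma frog_rhs :
    (∏' k : ℕ, (1 - q * q ^ k) / (1 - z * q ^ k)) =
      (∏' k : ℕ, (1 - q * q ^ k)) / ∏' k : ℕ, (1 - z * q ^ k) := by
  have ha : ∀ k : ℕ, 0 < 1 - q * q ^ k := frog_factor_pos hq0 hq1 hq0.le hq1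
  have hb : ∀ k : ℕ, 0 < 1 - z * q ^ k := frog_factor_pos hq0 hq1 hz0 hz1
  have hsa := frog_log_summable hq0 hq1 hq0.le hq1
  have hsb := frog_log_summable hq0 hq1 hz0 hz1
  have hlog : ∀ k : ℕ, Real.log ((1 - q * q ^ k) / (1 - z * q ^ k)) =
      Real.log (1 - q * q ^ k) - Real.log (1 - z * q ^ k) :=
    fun k => Real.log_div (ha k).ne' (hb k).ne'
  have hs : Summable fun k : ℕ => Real.log ((1 - q * q ^ k) / (1 - z * q ^ k)) :=
    (hsa.sub hsb).congr fun k => (hlog k).symm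
  rw [tprod_eq_exp_general _ (fun k => div_pos (ha k) (hb k)) hs,
    frog_tprod_eq_exp hq0 hq1 hq0.le hq1, frog_tprod_eq_exp hq0 hq1 hz0 hz1,
    ← Real.exp_sub, ← Summable.tsum_sub hsa hsb]
  exact congrArg Real.exp (tsum_congr hlog)

end

theorem frog_mgf (ρ : ℝ) (hρ : ρ ∈ Set.Ioo (0:ℝ) 1) (t : ℝ) (ht : Real.exp t * ρ < 1) :
    (∑' x : ℕ, Real.exp (t * x) * ρ ^ x * ∏' j : ℕ, (1 - ρ ^ (x + 1 + j))) =
      ∏' k : ℕ, (1 - ρ ^ (k + 1)) / (1 - Real.exp t * ρ ^ (k + 1)) := by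
  obtain ⟨hρ0, hρ1⟩ := hρ
  have hz0 : 0 ≤ Real.exp t * ρ := by positivity
  have hz1 : Real.exp t * ρ < 1 := ht
  have hL : (∑' x : ℕ, Real.exp (t * x) * ρ ^ x * ∏' j : ℕ, (1 - ρ ^ (x + 1 + j))) =
      ∑' x : ℕ, (Real.exp t * ρ) ^ x * frogP ρ x := by
    refine tsum_congr fun x => ?_
    show Real.exp (t * x) * ρ ^ x * frogP ρ x = _
    rw [mul_comm t (x : ℝ), Real.exp_nat_mul, mul_pow]
  have hR : (∏' k : ℕ, (1 - ρ ^ (k + 1)) / (1 - Real.exp t * ρ ^ (k + 1))) =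
      ∏' k : ℕ, (1 - ρ * ρ ^ k) / (1 - (Real.exp t * ρ) * ρ ^ k) := by
    refine tprod_congr fun k => ?_
    rw [pow_succ', ← mul_assoc]
  have hP0 : frogP ρ 0 = ∏' k : ℕ, (1 - ρ * ρ ^ k) := by
    rw [frogP_eq 0]
    exact tprod_congr fun j => by norm_num
  rw [hL, hR, frog_main hρ0 hρ1 hz0 hz1, frog_rhs hρ0 hρ1 hz0 hz1, hP0]
end

section
/- As ρ → 1⁻, ∑_{k=1}^∞ ρ^k/(1-ρ^k) is asymptotically equivalent to (1/(1-ρ)) · ln(1/(1-ρ)); i.e., the ratio of the two expressions tends to 1. -/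
open Filter Set

/-- Key inequality: `ρ^n (1 + n(1-ρ)) ≤ 1` for `ρ ∈ [0,1]`. -/
lemma lambert_key (ρ : ℝ) (hρ0 : 0 ≤ ρ) (hρ1 : ρ ≤ 1) (n : ℕ) :
    ρ ^ n * (1 + n * (1 - ρ)) ≤ 1 := by
  have h1 : 1 + (n : ℝ) * (1 - ρ) ≤ (1 + (1 - ρ)) ^ n := by
    have := one_add_mul_le_pow (by linarith : (-2 : ℝ) ≤ 1 - ρ) n
    linarith
  calc ρ ^ n * (1 + n * (1 - ρ)) ≤ ρ ^ n * (1 + (1 - ρ)) ^ n :=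
        mul_le_mul_of_nonneg_left h1 (pow_nonneg hρ0 n)
    _ = (ρ * (2 - ρ)) ^ n := by rw [← mul_pow]; ring_nf
    _ ≤ 1 := pow_le_one₀ (by nlinarith) (by nlinarith)

theorem lambert_asymptotic :
    Tendsto
      (fun ρ : ℝ =>
        (∑' k : ℕ, ρ ^ (k + 1) / (1 - ρ ^ (k + 1))) /
          ((1 / (1 - ρ)) * Real.log (1 / (1 - ρ))))
      (nhdsWithin 1 (Set.Iio 1)) (nhds 1) := by
  set F : ℝ → ℝ := fun ρ =>
    (∑' k : ℕ, ρ ^ (k + 1) / (1 - ρ ^ (k + 1))) /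
      ((1 / (1 - ρ)) * Real.log (1 / (1 - ρ))) with hF
  -- the set where everything is nice
  have hIoo : Ioo (0 : ℝ) 1 ∈ nhdsWithin (1 : ℝ) (Set.Iio 1) :=
    Ioo_mem_nhdsLT_of_mem (by constructor <;> norm_num)
  -- M ρ := -log(1-ρ) tends to atTop
  have h1sub : Tendsto (fun ρ : ℝ => 1 - ρ) (nhdsWithin 1 (Set.Iio 1))
      (nhdsWithin 0 (Set.Ioi 0)) := by
    apply tendsto_nhdsWithin_of_tendsto_nhds_of_eventually_within
    · have hc : Continuous (fun ρ : ℝ => 1 - ρ) := by continuity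
      exact (hc.tendsto' 1 0 (by norm_num)).mono_left nhdsWithin_le_nhds
    · exact eventually_mem_nhdsWithin.mono fun x hx => Set.mem_Ioi.mpr (sub_pos.mpr hx)
  have hM : Tendsto (fun ρ : ℝ => -Real.log (1 - ρ)) (nhdsWithin 1 (Set.Iio 1)) atTop := by
    have := Real.tendsto_log_nhdsGT_zero.comp h1sub
    exact tendsto_neg_atBot_atTop.comp this
  -- main bounds for ρ ∈ Ioo 0 1
  have main : ∀ ρ ∈ Ioo (0 : ℝ) 1,
      -Real.log (1 - ρ) ≤ (1 - ρ) * (∑' k : ℕ, ρ ^ (k + 1) / (1 - ρ ^ (k + 1))) ∧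
      (1 - ρ) * (∑' k : ℕ, ρ ^ (k + 1) / (1 - ρ ^ (k + 1))) ≤ -Real.log (1 - ρ) + ρ := by
    rintro ρ ⟨hρ0, hρ1⟩
    have h1ρ : 0 < 1 - ρ := by linarith
    have hpowlt : ∀ k : ℕ, ρ ^ (k + 1) < 1 := fun k =>
      pow_lt_one₀ hρ0.le hρ1 (Nat.succ_ne_zero k)
    have hpowpos : ∀ k : ℕ, 0 < ρ ^ (k + 1) := fun k => pow_pos hρ0 _
    have hd : ∀ k : ℕ, 0 < 1 - ρ ^ (k + 1) := fun k => by linarith [hpowlt k]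
    -- summability of the series
    have hS : Summable (fun k : ℕ => ρ ^ (k + 1) / (1 - ρ ^ (k + 1))) := by
      apply Summable.of_nonneg_of_le
        (fun k => (div_nonneg (hpowpos k).le (hd k).le))
        (fun k => ?_)
        (((summable_geometric_of_lt_one hρ0.le hρ1).mul_right (ρ / (1 - ρ))))
      have hle : 1 - ρ ≤ 1 - ρ ^ (k + 1) := by
        have : ρ ^ (k + 1) ≤ ρ := pow_le_of_le_one hρ0.le hρ1.le (Nat.succ_ne_zero k)
        linarith
      calc ρ ^ (k + 1) / (1 - ρ ^ (k + 1)) ≤ ρ ^ (k + 1) / (1 - ρ) :=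
            div_le_div_of_nonneg_left (hpowpos k).le h1ρ hle
        _ = ρ ^ k * (ρ / (1 - ρ)) := by rw [pow_succ]; ring
    -- log series
    have hg : HasSum (fun k : ℕ => ρ ^ (k + 1) / (k + 1)) (-Real.log (1 - ρ)) :=
      Real.hasSum_pow_div_log_of_abs_lt_one (by rw [abs_of_nonneg hρ0.le]; exact hρ1)
    -- geometric series
    have hgeom : HasSum (fun k : ℕ => ρ ^ (k + 1)) (ρ / (1 - ρ)) := by
      have := (hasSum_geometric_of_lt_one hρ0.le hρ1).mul_left ρ
      simp_rw [← pow_succ'] at this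
      rw [div_eq_mul_inv]
      exact this
    constructor
    · -- lower bound
      have hterm : ∀ k : ℕ, ρ ^ (k + 1) / (k + 1) ≤
          (1 - ρ) * (ρ ^ (k + 1) / (1 - ρ ^ (k + 1))) := by
        intro k
        have hber : 1 + ((k : ℝ) + 1) * (ρ - 1) ≤ ρ ^ (k + 1) := by
          have := one_add_mul_le_pow (by linarith : (-2 : ℝ) ≤ ρ - 1) (k + 1)
          simpa using this
        rw [← mul_div_assoc, div_le_div_iff₀ (by positivity) (hd k)]
        have hk : (0:ℝ) < (k : ℝ) + 1 := by positivity
        nlinarith [hpowpos k, hd k]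
      calc -Real.log (1 - ρ) = ∑' k : ℕ, ρ ^ (k + 1) / (k + 1) := hg.tsum_eq.symm
        _ ≤ ∑' k : ℕ, (1 - ρ) * (ρ ^ (k + 1) / (1 - ρ ^ (k + 1))) :=
            Summable.tsum_le_tsum hterm hg.summable (hS.mul_left (1 - ρ))
        _ = (1 - ρ) * ∑' k : ℕ, ρ ^ (k + 1) / (1 - ρ ^ (k + 1)) := tsum_mul_left
    · -- upper bound
      have hterm : ∀ k : ℕ, (1 - ρ) * (ρ ^ (k + 1) / (1 - ρ ^ (k + 1))) ≤
          ρ ^ (k + 1) / (k + 1) + (1 - ρ) * ρ ^ (k + 1) := by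
        intro k
        have key := lambert_key ρ hρ0.le hρ1.le (k + 1)
        push_cast at key
        set a : ℝ := ρ ^ (k + 1) / ((k : ℝ) + 1) with ha_def
        have hk : (0:ℝ) < (k : ℝ) + 1 := by positivity
        have ha : a * ((k : ℝ) + 1) = ρ ^ (k + 1) := div_mul_cancel₀ _ hk.ne'
        have ha0 : 0 ≤ a := by positivity
        rw [← mul_div_assoc, div_le_iff₀ (hd k)]
        have hkey2 : a * (ρ ^ (k + 1) * (1 + ((k : ℝ) + 1) * (1 - ρ))) ≤ a * 1 :=
          mul_le_mul_of_nonneg_left key ha0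
        have h3 : a * (ρ ^ (k + 1) * (((k : ℝ) + 1) * (1 - ρ))) =
            (1 - ρ) * ρ ^ (k + 1) * ρ ^ (k + 1) := by
          rw [show a * (ρ ^ (k + 1) * (((k : ℝ) + 1) * (1 - ρ))) =
            (a * ((k : ℝ) + 1)) * ((1 - ρ) * ρ ^ (k + 1)) by ring, ha]
          ring
        nlinarith [hpowpos k, hd k]
      calc (1 - ρ) * ∑' k : ℕ, ρ ^ (k + 1) / (1 - ρ ^ (k + 1))
          = ∑' k : ℕ, (1 - ρ) * (ρ ^ (k + 1) / (1 - ρ ^ (k + 1))) := tsum_mul_left.symm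
        _ ≤ ∑' k : ℕ, (ρ ^ (k + 1) / (k + 1) + (1 - ρ) * ρ ^ (k + 1)) :=
            Summable.tsum_le_tsum hterm (hS.mul_left (1 - ρ))
              (hg.summable.add (hgeom.summable.mul_left (1 - ρ)))
        _ = -Real.log (1 - ρ) + (1 - ρ) * (ρ / (1 - ρ)) :=
            (hg.add (hgeom.mul_left (1 - ρ))).tsum_eq
        _ = -Real.log (1 - ρ) + ρ := by rw [mul_div_cancel₀ _ h1ρ.ne']
  -- squeeze
  have hbounds : ∀ ρ ∈ Ioo (0 : ℝ) 1,
      (1 : ℝ) ≤ F ρ ∧ F ρ ≤ 1 + (-Real.log (1 - ρ))⁻¹ := by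
    rintro ρ hρ
    obtain ⟨hρ0, hρ1⟩ := hρ
    obtain ⟨hlow, hup⟩ := main ρ ⟨hρ0, hρ1⟩
    have h1ρ : 0 < 1 - ρ := by linarith
    have hM0 : 0 < -Real.log (1 - ρ) := by
      have : Real.log (1 - ρ) < 0 := Real.log_neg h1ρ (by linarith)
      linarith
    set S : ℝ := ∑' k : ℕ, ρ ^ (k + 1) / (1 - ρ ^ (k + 1)) with hSdef
    have hden : (1 / (1 - ρ)) * Real.log (1 / (1 - ρ)) = -Real.log (1 - ρ) / (1 - ρ) := by
      rw [one_div, Real.log_inv]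
      field_simp
    have hFeq : F ρ = (1 - ρ) * S / (-Real.log (1 - ρ)) := by
      rw [hF]
      simp only
      rw [hden, div_div_eq_mul_div]
      ring
    constructor
    · rw [hFeq, le_div_iff₀ hM0, one_mul]
      exact hlow
    · rw [hFeq, div_le_iff₀ hM0, add_mul, one_mul, inv_mul_cancel₀ hM0.ne']
      linarith
  refine tendsto_of_tendsto_of_tendsto_of_le_of_le'
    (g := fun _ : ℝ => (1 : ℝ)) (h := fun ρ : ℝ => 1 + (-Real.log (1 - ρ))⁻¹)
    tendsto_const_nhds ?_ ?_ ?_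
  · have : Tendsto (fun ρ : ℝ => 1 + (-Real.log (1 - ρ))⁻¹)
        (nhdsWithin 1 (Set.Iio 1)) (nhds (1 + 0)) :=
      tendsto_const_nhds.add hM.inv_tendsto_atTop
    simpa using this
  · exact eventually_of_mem hIoo fun ρ hρ => (hbounds ρ hρ).1
  · exact eventually_of_mem hIoo fun ρ hρ => (hbounds ρ hρ).2
end

section
/- For each integer j ≥ 1, as ρ → 1⁻, ∑_{k=1}^∞ k^j ρ^k/(1-ρ^k) is asymptotically equivalent to j! ζ(j+1) / (1-ρ)^{j+1}, where ζ is the Riemann zeta function. -/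
open Filter Set Finset

noncomputable def auxF (j : ℕ) (x : ℝ) : ℝ := ∑' k : ℕ, ((k : ℝ) + 1) ^ j * x ^ (k + 1)

lemma summable_auxF (j : ℕ) {x : ℝ} (hx : |x| < 1) :
    Summable (fun k : ℕ => ((k : ℝ) + 1) ^ j * x ^ (k + 1)) := by
  have h := summable_pow_mul_geometric_of_norm_lt_one (R := ℝ) j (by rwa [Real.norm_eq_abs])
  have := (summable_nat_add_iff (f := fun n : ℕ => (n : ℝ) ^ j * x ^ n) 1).2 h
  refine this.congr fun n => ?_
  push_cast
  ring

lemma auxF_nonneg (j : ℕ) {x : ℝ} (h0 : 0 ≤ x) : 0 ≤ auxF j x :=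
  tsum_nonneg fun k => mul_nonneg (by positivity) (by positivity)

lemma auxF_le (j : ℕ) {x : ℝ} (h0 : 0 ≤ x) (h1 : x < 1) :
    auxF j x ≤ (j.factorial : ℝ) * (x / (1 - x) ^ (j + 1)) := by
  have hx : |x| < 1 := by rwa [abs_of_nonneg h0]
  have hs : HasSum (fun n : ℕ => ((n + j).choose j : ℝ) * x ^ n) (1 / (1 - x) ^ (j + 1)) :=
    hasSum_choose_mul_geometric_of_norm_lt_one j (by rwa [Real.norm_eq_abs])
  have hs2 := hs.mul_left ((j.factorial : ℝ) * x)
  have hsum2 : Summable (fun n : ℕ => (j.factorial : ℝ) * x * (((n + j).choose j : ℝ) * x ^ n)) :=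
    hs2.summable
  have hle : ∀ k : ℕ, ((k : ℝ) + 1) ^ j * x ^ (k + 1)
      ≤ (j.factorial : ℝ) * x * (((k + j).choose j : ℝ) * x ^ k) := by
    intro k
    have hnat : (k + 1) ^ j ≤ j.factorial * (k + j).choose j := by
      calc (k + 1) ^ j ≤ (k + 1).ascFactorial j := Nat.pow_succ_le_ascFactorial _ _
        _ = j.factorial * (k + j).choose j := Nat.ascFactorial_eq_factorial_mul_choose k j
    have hcast : (((k : ℝ) + 1)) ^ j ≤ (j.factorial : ℝ) * ((k + j).choose j : ℝ) := by
      exact_mod_cast hnat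
    calc ((k : ℝ) + 1) ^ j * x ^ (k + 1)
        ≤ ((j.factorial : ℝ) * ((k + j).choose j : ℝ)) * x ^ (k + 1) := by
          exact mul_le_mul_of_nonneg_right hcast (by positivity)
      _ = (j.factorial : ℝ) * x * (((k + j).choose j : ℝ) * x ^ k) := by ring
  calc auxF j x ≤ ∑' k : ℕ, (j.factorial : ℝ) * x * (((k + j).choose j : ℝ) * x ^ k) :=
        Summable.tsum_le_tsum hle (summable_auxF j hx) hsum2
    _ = (j.factorial : ℝ) * x * (1 / (1 - x) ^ (j + 1)) := hs2.tsum_eq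
    _ = (j.factorial : ℝ) * (x / (1 - x) ^ (j + 1)) := by ring

lemma choose_shift_tsum {j : ℕ} (hj : 1 ≤ j) {x : ℝ} (hx : |x| < 1) :
    Summable (fun k : ℕ => ((k + 1).choose j : ℝ) * x ^ (k + 1)) ∧
    ∑' k : ℕ, ((k + 1).choose j : ℝ) * x ^ (k + 1) = x ^ j * (1 / (1 - x) ^ (j + 1)) := by
  set A : ℕ → ℝ := fun k => (k.choose j : ℝ) * x ^ k with hA
  have hxn : ‖x‖ < 1 := by rwa [Real.norm_eq_abs]
  have hs : HasSum (fun n : ℕ => ((n + j).choose j : ℝ) * x ^ n) (1 / (1 - x) ^ (j + 1)) :=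
    hasSum_choose_mul_geometric_of_norm_lt_one j hxn
  have hshift : (fun n : ℕ => A (n + j)) = fun n : ℕ => ((n + j).choose j : ℝ) * x ^ n * x ^ j := by
    funext n; simp only [hA]; rw [pow_add]; ring
  have hs' : HasSum (fun n : ℕ => A (n + j)) ((1 / (1 - x) ^ (j + 1)) * x ^ j) := by
    rw [hshift]; exact hs.mul_right _
  have hAsum : Summable A := (summable_nat_add_iff j).1 hs'.summable
  have hAshift : Summable (fun k : ℕ => A (k + 1)) := (summable_nat_add_iff 1).2 hAsum
  have hkey : ∑' k : ℕ, A k = x ^ j * (1 / (1 - x) ^ (j + 1)) := by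
    have h1 := Summable.sum_add_tsum_nat_add (k := j) hAsum
    have h2 : ∑ i ∈ range j, A i = 0 := by
      refine Finset.sum_eq_zero fun i hi => ?_
      have : i.choose j = 0 := Nat.choose_eq_zero_of_lt (Finset.mem_range.1 hi)
      simp [hA, this]
    rw [h2, zero_add, hs'.tsum_eq] at h1
    rw [← h1]; ring
  have h0 : A 0 = 0 := by simp [hA, Nat.choose_eq_zero_of_lt hj]
  have h3 : ∑' k : ℕ, A (k + 1) = x ^ j * (1 / (1 - x) ^ (j + 1)) := by
    have := tsum_eq_zero_add' hAshift
    rw [h0, zero_add] at this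
    rw [← this, hkey]
  exact ⟨hAshift, h3⟩

lemma auxF_ge {j : ℕ} (hj : 1 ≤ j) {x : ℝ} (h0 : 0 ≤ x) (h1 : x < 1) :
    (j.factorial : ℝ) * (x ^ j / (1 - x) ^ (j + 1)) ≤ auxF j x := by
  have hx : |x| < 1 := by rwa [abs_of_nonneg h0]
  obtain ⟨hsum, htsum⟩ := choose_shift_tsum hj hx
  have hle : ∀ k : ℕ, (j.factorial : ℝ) * (((k + 1).choose j : ℝ) * x ^ (k + 1))
      ≤ ((k : ℝ) + 1) ^ j * x ^ (k + 1) := by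
    intro k
    have hnat : j.factorial * (k + 1).choose j ≤ (k + 1) ^ j := by
      calc j.factorial * (k + 1).choose j = (k + 1).descFactorial j :=
            (Nat.descFactorial_eq_factorial_mul_choose _ _).symm
        _ ≤ (k + 1) ^ j := Nat.descFactorial_le_pow _ _
    have hcast : (j.factorial : ℝ) * ((k + 1).choose j : ℝ) ≤ ((k : ℝ) + 1) ^ j := by
      exact_mod_cast hnat
    calc (j.factorial : ℝ) * (((k + 1).choose j : ℝ) * x ^ (k + 1))
        = ((j.factorial : ℝ) * ((k + 1).choose j : ℝ)) * x ^ (k + 1) := by ring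
      _ ≤ ((k : ℝ) + 1) ^ j * x ^ (k + 1) :=
          mul_le_mul_of_nonneg_right hcast (by positivity)
  calc (j.factorial : ℝ) * (x ^ j / (1 - x) ^ (j + 1))
      = (j.factorial : ℝ) * (x ^ j * (1 / (1 - x) ^ (j + 1))) := by ring
    _ = ∑' k : ℕ, (j.factorial : ℝ) * (((k + 1).choose j : ℝ) * x ^ (k + 1)) := by
        rw [tsum_mul_left, htsum]
    _ ≤ auxF j x := Summable.tsum_le_tsum hle (hsum.mul_left _) (summable_auxF j hx)

lemma lim_auxF {j : ℕ} (hj : 1 ≤ j) :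
    Tendsto (fun x : ℝ => (1 - x) ^ (j + 1) * auxF j x) (nhdsWithin 1 (Set.Iio 1))
      (nhds (j.factorial : ℝ)) := by
  have hmem : Ioo (0 : ℝ) 1 ∈ nhdsWithin 1 (Set.Iio 1) := by
    rw [mem_nhdsLT_iff_exists_Ioo_subset]
    exact ⟨0, by norm_num, le_refl _⟩
  have hlow : Tendsto (fun x : ℝ => (j.factorial : ℝ) * x ^ j) (nhdsWithin 1 (Set.Iio 1))
      (nhds (j.factorial : ℝ)) := by
    have : Tendsto (fun x : ℝ => (j.factorial : ℝ) * x ^ j) (nhds 1)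
        (nhds ((j.factorial : ℝ) * 1 ^ j)) :=
      (continuous_const.mul (continuous_pow j)).tendsto 1
    simpa using this.mono_left nhdsWithin_le_nhds
  have hhigh : Tendsto (fun x : ℝ => (j.factorial : ℝ) * x) (nhdsWithin 1 (Set.Iio 1))
      (nhds (j.factorial : ℝ)) := by
    have : Tendsto (fun x : ℝ => (j.factorial : ℝ) * x) (nhds 1) (nhds ((j.factorial : ℝ) * 1)) :=
      (continuous_const.mul continuous_id).tendsto 1
    simpa using this.mono_left nhdsWithin_le_nhds
  refine tendsto_of_tendsto_of_tendsto_of_le_of_le' hlow hhigh ?_ ?_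
  · filter_upwards [hmem] with x hx
    have hx1 : (0:ℝ) < 1 - x := by linarith [hx.2]
    have hpow : (0:ℝ) < (1 - x) ^ (j + 1) := by positivity
    have h := auxF_ge hj (le_of_lt hx.1) hx.2
    calc (j.factorial : ℝ) * x ^ j
        = (1 - x) ^ (j + 1) * ((j.factorial : ℝ) * (x ^ j / (1 - x) ^ (j + 1))) := by
          field_simp
      _ ≤ (1 - x) ^ (j + 1) * auxF j x := mul_le_mul_of_nonneg_left h (le_of_lt hpow)
  · filter_upwards [hmem] with x hx
    have hx1 : (0:ℝ) < 1 - x := by linarith [hx.2]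
    have hpow : (0:ℝ) < (1 - x) ^ (j + 1) := by positivity
    have h := auxF_le j (le_of_lt hx.1) hx.2
    calc (1 - x) ^ (j + 1) * auxF j x
        ≤ (1 - x) ^ (j + 1) * ((j.factorial : ℝ) * (x / (1 - x) ^ (j + 1))) :=
          mul_le_mul_of_nonneg_left h (le_of_lt hpow)
      _ = (j.factorial : ℝ) * x := by field_simp

lemma Ioo_mem : Ioo (0 : ℝ) 1 ∈ nhdsWithin 1 (Set.Iio 1) := by
  rw [mem_nhdsLT_iff_exists_Ioo_subset]
  exact ⟨0, by norm_num, le_refl _⟩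

lemma geom_pos (m : ℕ) {ρ : ℝ} (h0 : 0 < ρ) : (0:ℝ) < ∑ i ∈ range (m + 1), ρ ^ i :=
  Finset.sum_pos (fun i _ => by positivity) ⟨0, by simp⟩

lemma geom_identity (m : ℕ) (ρ : ℝ) :
    1 - ρ ^ (m + 1) = (∑ i ∈ range (m + 1), ρ ^ i) * (1 - ρ) := by
  have := geom_sum_mul ρ (m + 1)
  nlinarith [this]

lemma geom_sq_ge (m : ℕ) {ρ : ℝ} (h0 : 0 ≤ ρ) :
    ((m : ℝ) + 1) ^ 2 * ρ ^ m ≤ (∑ i ∈ range (m + 1), ρ ^ i) ^ 2 := by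
  have key := sum_sq_le_sum_mul_sum_of_sq_eq_mul (range (m + 1))
    (r := fun _ : ℕ => Real.sqrt (ρ ^ m)) (f := fun i => ρ ^ i) (g := fun i => ρ ^ (m - i))
    (fun i _ => by positivity) (fun i _ => by positivity)
    (fun i hi => by
      rw [Real.sq_sqrt (by positivity), ← pow_add]
      congr 1
      have : i ≤ m := Nat.lt_succ_iff.1 (Finset.mem_range.1 hi)
      omega)
  have h1 : ∑ _i ∈ range (m + 1), Real.sqrt (ρ ^ m) = ((m:ℝ) + 1) * Real.sqrt (ρ ^ m) := by
    rw [Finset.sum_const, card_range]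
    push_cast
    ring
  have h2 : ∑ i ∈ range (m + 1), ρ ^ (m - i) = ∑ i ∈ range (m + 1), ρ ^ i := by
    have := Finset.sum_range_reflect (fun i => ρ ^ i) (m + 1)
    simpa using this
  rw [h1, h2, mul_pow, Real.sq_sqrt (by positivity), ← sq] at key
  exact key

lemma perterm_lim {j : ℕ} (hj : 1 ≤ j) (m : ℕ) :
    Tendsto (fun ρ : ℝ => (1 - ρ) ^ (j + 1) * auxF j (ρ ^ (m + 1)))
      (nhdsWithin 1 (Set.Iio 1))
      (nhds ((j.factorial : ℝ) * (1 / ((m : ℝ) + 1) ^ (j + 1)))) := by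
  have hpow : Tendsto (fun ρ : ℝ => ρ ^ (m + 1)) (nhdsWithin 1 (Set.Iio 1))
      (nhdsWithin 1 (Set.Iio 1)) := by
    rw [tendsto_nhdsWithin_iff]
    constructor
    · have : Tendsto (fun ρ : ℝ => ρ ^ (m + 1)) (nhds 1) (nhds (1 ^ (m + 1))) :=
        (continuous_pow (m + 1)).tendsto 1
      simpa using this.mono_left nhdsWithin_le_nhds
    · filter_upwards [Ioo_mem] with ρ hρ
      exact pow_lt_one₀ (le_of_lt hρ.1) hρ.2 (Nat.succ_ne_zero m)
  have hcomp := (lim_auxF hj).comp hpow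
  have hSlim : Tendsto (fun ρ : ℝ => ((∑ i ∈ range (m + 1), ρ ^ i)⁻¹) ^ (j + 1))
      (nhdsWithin 1 (Set.Iio 1)) (nhds ((1 / ((m : ℝ) + 1)) ^ (j + 1))) := by
    have hc : Tendsto (fun ρ : ℝ => ∑ i ∈ range (m + 1), ρ ^ i) (nhds 1)
        (nhds ((m : ℝ) + 1)) := by
      have : Continuous fun ρ : ℝ => ∑ i ∈ range (m + 1), ρ ^ i :=
        continuous_finset_sum _ fun i _ => continuous_pow i
      have h := this.tendsto 1
      simpa using h
    have hne : ((m : ℝ) + 1) ≠ 0 := by positivity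
    have := (hc.inv₀ hne).pow (j + 1)
    rw [one_div]
    exact this.mono_left nhdsWithin_le_nhds
  have hmul := hSlim.mul hcomp
  have : ((1 / ((m : ℝ) + 1)) ^ (j + 1)) * (j.factorial : ℝ)
      = (j.factorial : ℝ) * (1 / ((m : ℝ) + 1) ^ (j + 1)) := by
    rw [div_pow, one_pow]
    ring
  rw [this] at hmul
  refine hmul.congr' ?_
  filter_upwards [Ioo_mem] with ρ hρ
  have hS := geom_pos m hρ.1
  have hgi := geom_identity m ρ
  simp only [Function.comp]
  rw [show (1 - ρ) = (∑ i ∈ range (m + 1), ρ ^ i)⁻¹ * (1 - ρ ^ (m + 1)) by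
    rw [hgi]; field_simp]
  rw [mul_pow, mul_assoc]

lemma dct_bound {j : ℕ} (hj : 1 ≤ j) (m : ℕ) {ρ : ℝ} (h0 : 0 < ρ) (h1 : ρ < 1) :
    (1 - ρ) ^ (j + 1) * auxF j (ρ ^ (m + 1)) ≤ (j.factorial : ℝ) / ((m : ℝ) + 1) ^ 2 := by
  set S := ∑ i ∈ range (m + 1), ρ ^ i with hSdef
  have hS : 0 < S := geom_pos m h0
  have hS1 : 1 ≤ S := by
    have : (1:ℝ) = ∑ i ∈ range 1, ρ ^ i := by simp
    rw [this, hSdef]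
    exact Finset.sum_le_sum_of_subset_of_nonneg
      (Finset.range_subset_range.2 (Nat.succ_le_succ (Nat.zero_le m)))
      (fun i _ _ => by positivity)
  have hx0 : (0:ℝ) < ρ ^ (m + 1) := by positivity
  have hx1 : ρ ^ (m + 1) < 1 := pow_lt_one₀ (le_of_lt h0) h1 (Nat.succ_ne_zero m)
  have h1ρ : (0:ℝ) < 1 - ρ := by linarith
  have hgi := geom_identity m ρ
  have hSj : S ^ 2 ≤ S ^ (j + 1) := pow_le_pow_right₀ hS1 (by omega)
  have hsq : ((m:ℝ)+1)^2 * ρ^m ≤ S^2 := geom_sq_ge m (le_of_lt h0)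
  have hle := auxF_le j (le_of_lt hx0) hx1
  have hpow1ρ : (0:ℝ) < (1-ρ)^(j+1) := by positivity
  have step1 : (1-ρ)^(j+1) * auxF j (ρ^(m+1)) ≤ (j.factorial:ℝ) * ρ^(m+1) / S^(j+1) := by
    have h1x : (1 - ρ^(m+1))^(j+1) = S^(j+1) * (1-ρ)^(j+1) := by
      rw [hgi, ← hSdef, mul_pow]
    calc (1-ρ)^(j+1) * auxF j (ρ^(m+1))
        ≤ (1-ρ)^(j+1) * ((j.factorial:ℝ) * (ρ^(m+1) / (1 - ρ^(m+1))^(j+1))) :=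
          mul_le_mul_of_nonneg_left hle (le_of_lt hpow1ρ)
      _ = (j.factorial:ℝ) * ρ^(m+1) / S^(j+1) := by
          rw [h1x]
          have hSne : S ≠ 0 := ne_of_gt hS
          have h1ρne : (1-ρ) ≠ 0 := ne_of_gt h1ρ
          field_simp
  have step2 : (j.factorial:ℝ) * ρ^(m+1) / S^(j+1) ≤ (j.factorial:ℝ) / ((m:ℝ)+1)^2 := by
    rw [div_le_div_iff₀ (by positivity) (by positivity)]
    have hA : ρ^(m+1) * ((m:ℝ)+1)^2 ≤ S^(j+1) := by
      calc ρ^(m+1) * ((m:ℝ)+1)^2 = ρ * (((m:ℝ)+1)^2 * ρ^m) := by rw [pow_succ]; ring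
        _ ≤ 1 * S^2 := mul_le_mul (le_of_lt h1) hsq (by positivity) (by norm_num)
        _ = S^2 := one_mul _
        _ ≤ S^(j+1) := hSj
    calc (j.factorial:ℝ) * ρ^(m+1) * ((m:ℝ)+1)^2
        = (j.factorial:ℝ) * (ρ^(m+1) * ((m:ℝ)+1)^2) := by ring
      _ ≤ (j.factorial:ℝ) * S^(j+1) := mul_le_mul_of_nonneg_left hA (Nat.cast_nonneg _)
  exact le_trans step1 step2

lemma swap_tsum (j : ℕ) {ρ : ℝ} (h0 : 0 < ρ) (h1 : ρ < 1) :
    (∑' k : ℕ, ((k : ℝ) + 1) ^ j * ρ ^ (k + 1) / (1 - ρ ^ (k + 1)))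
      = ∑' m : ℕ, auxF j (ρ ^ (m + 1)) := by
  set f : ℕ → ℕ → ℝ := fun k m => ((k : ℝ) + 1) ^ j * ρ ^ ((k + 1) * (m + 1)) with hf
  have hx1 : ∀ n : ℕ, ρ ^ (n + 1) < 1 := fun n =>
    pow_lt_one₀ (le_of_lt h0) h1 (Nat.succ_ne_zero n)
  have hrow : ∀ k : ℕ, HasSum (f k)
      (((k : ℝ) + 1) ^ j * ρ ^ (k + 1) / (1 - ρ ^ (k + 1))) := by
    intro k
    have hgeo : HasSum (fun m : ℕ => (ρ ^ (k + 1)) ^ m) ((1 - ρ ^ (k + 1))⁻¹) :=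
      hasSum_geometric_of_lt_one (by positivity) (hx1 k)
    have h2 := hgeo.mul_left (((k : ℝ) + 1) ^ j * ρ ^ (k + 1))
    have heq : (fun m : ℕ => ((k : ℝ) + 1) ^ j * ρ ^ (k + 1) * (ρ ^ (k + 1)) ^ m) = f k := by
      funext m
      rw [hf]
      simp only
      rw [← pow_mul, mul_assoc, ← pow_add]
      congr 2
      ring
    rw [heq] at h2
    rw [div_eq_mul_inv, mul_assoc]
    rw [mul_assoc] at h2
    exact h2
  have hnn : 0 ≤ Function.uncurry f := by
    intro p
    simp only [Function.uncurry, hf, Pi.zero_apply]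
    positivity
  have hcols : Summable fun k : ℕ => ∑' m : ℕ, (Function.uncurry f) (k, m) := by
    have hρ : |ρ| < 1 := by rwa [abs_of_pos h0]
    have hsum : Summable (fun k : ℕ => (((k : ℝ) + 1) ^ j * ρ ^ (k + 1)) * (1 - ρ)⁻¹) :=
      (summable_auxF j hρ).mul_right _
    refine Summable.of_nonneg_of_le (fun k => tsum_nonneg fun m => hnn (k, m)) (fun k => ?_) hsum
    have : ∑' m : ℕ, (Function.uncurry f) (k, m)
        = ((k : ℝ) + 1) ^ j * ρ ^ (k + 1) / (1 - ρ ^ (k + 1)) := (hrow k).tsum_eq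
    rw [this]
    have hmono : ρ ^ (k + 1) ≤ ρ := by
      calc ρ ^ (k + 1) ≤ ρ ^ 1 :=
            pow_le_pow_of_le_one (le_of_lt h0) (le_of_lt h1) (by omega)
        _ = ρ := pow_one ρ
    have hd : 1 - ρ ≤ 1 - ρ ^ (k + 1) := by linarith
    calc ((k : ℝ) + 1) ^ j * ρ ^ (k + 1) / (1 - ρ ^ (k + 1))
        ≤ ((k : ℝ) + 1) ^ j * ρ ^ (k + 1) / (1 - ρ) :=
          div_le_div_of_nonneg_left (by positivity) (by linarith) hd
      _ = (((k : ℝ) + 1) ^ j * ρ ^ (k + 1)) * (1 - ρ)⁻¹ := by rw [div_eq_mul_inv]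
  have hu : Summable (Function.uncurry f) :=
    (summable_prod_of_nonneg hnn).2 ⟨fun k => (hrow k).summable, hcols⟩
  have hswap : ∑' (m : ℕ) (k : ℕ), f k m = ∑' (k : ℕ) (m : ℕ), f k m := Summable.tsum_comm hu
  have hL : (∑' k : ℕ, ((k : ℝ) + 1) ^ j * ρ ^ (k + 1) / (1 - ρ ^ (k + 1)))
      = ∑' (k : ℕ) (m : ℕ), f k m := by
    refine tsum_congr fun k => ?_
    exact (hrow k).tsum_eq.symm
  have hR : ∀ m : ℕ, (∑' k : ℕ, f k m) = auxF j (ρ ^ (m + 1)) := by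
    intro m
    refine tsum_congr fun k => ?_
    rw [hf]
    simp only
    rw [← pow_mul]
    congr 2
    ring
  rw [hL, ← hswap]
  exact tsum_congr hR

theorem higher_cumulant_asymptotic (j : ℕ) (hj : 1 ≤ j) :
    Tendsto
      (fun ρ : ℝ =>
        (∑' k : ℕ, ((k : ℝ) + 1) ^ j * ρ ^ (k + 1) / (1 - ρ ^ (k + 1))) /
          ((Nat.factorial j : ℝ) * (∑' n : ℕ, 1 / ((n : ℝ) + 1) ^ (j + 1)) / (1 - ρ) ^ (j + 1)))
      (nhdsWithin 1 (Set.Iio 1)) (nhds 1) := by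
  have hsum2 : Summable (fun n : ℕ => 1 / ((n : ℝ) + 1) ^ 2) := by
    have h := Real.summable_one_div_nat_pow.2 (by norm_num : 1 < 2)
    have := (summable_nat_add_iff (f := fun n : ℕ => 1 / (n : ℝ) ^ 2) 1).2 h
    refine this.congr fun n => ?_
    push_cast
    ring_nf
  have hsumz : Summable (fun n : ℕ => 1 / ((n : ℝ) + 1) ^ (j + 1)) := by
    refine Summable.of_nonneg_of_le (fun n => by positivity) (fun n => ?_) hsum2
    apply div_le_div_of_nonneg_left (by norm_num) (by positivity)
    exact pow_le_pow_right₀ (by push_cast; linarith [Nat.cast_nonneg (α := ℝ) n]) (by omega)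
  set c : ℝ := (j.factorial : ℝ) * (∑' n : ℕ, 1 / ((n : ℝ) + 1) ^ (j + 1)) with hc
  have hcpos : 0 < c := by
    refine mul_pos ?_ ?_
    · exact_mod_cast j.factorial_pos
    · exact Summable.tsum_pos hsumz (fun n => by positivity) 0 (by norm_num)
  have hbound_sum : Summable (fun m : ℕ => (j.factorial : ℝ) / ((m : ℝ) + 1) ^ 2) := by
    have := hsum2.mul_left (j.factorial : ℝ)
    refine this.congr fun m => ?_
    rw [mul_one_div]
  have hG : Tendsto (fun ρ : ℝ => ∑' m : ℕ, (1 - ρ) ^ (j + 1) * auxF j (ρ ^ (m + 1)))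
      (nhdsWithin 1 (Set.Iio 1)) (nhds c) := by
    have hgoal := tendsto_tsum_of_dominated_convergence
      (f := fun (ρ : ℝ) (m : ℕ) => (1 - ρ) ^ (j + 1) * auxF j (ρ ^ (m + 1)))
      (g := fun m : ℕ => (j.factorial : ℝ) * (1 / ((m : ℝ) + 1) ^ (j + 1)))
      (bound := fun m : ℕ => (j.factorial : ℝ) / ((m : ℝ) + 1) ^ 2)
      hbound_sum (perterm_lim hj) ?_
    · have : ∑' m : ℕ, (j.factorial : ℝ) * (1 / ((m : ℝ) + 1) ^ (j + 1)) = c := by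
        rw [hc, tsum_mul_left]
      rwa [this] at hgoal
    · filter_upwards [Ioo_mem] with ρ hρ
      intro m
      have hnn : 0 ≤ (1 - ρ) ^ (j + 1) * auxF j (ρ ^ (m + 1)) := by
        have h1 : (0:ℝ) ≤ 1 - ρ := by linarith [hρ.2]
        exact mul_nonneg (pow_nonneg h1 _) (auxF_nonneg j (pow_nonneg (le_of_lt hρ.1) _))
      rw [Real.norm_eq_abs, abs_of_nonneg hnn]
      exact dct_bound hj m hρ.1 hρ.2
  have hdiv : Tendsto (fun ρ : ℝ => (∑' m : ℕ, (1 - ρ) ^ (j + 1) * auxF j (ρ ^ (m + 1))) / c)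
      (nhdsWithin 1 (Set.Iio 1)) (nhds 1) := by
    have := hG.div_const c
    rwa [div_self (ne_of_gt hcpos)] at this
  refine hdiv.congr' ?_
  filter_upwards [Ioo_mem] with ρ hρ
  have h1ρ : (0:ℝ) < 1 - ρ := by linarith [hρ.2]
  have hpow : ((1:ℝ) - ρ) ^ (j + 1) ≠ 0 := by positivity
  rw [tsum_mul_left, swap_tsum j hρ.1 hρ.2]
  rw [div_div_eq_mul_div]
  rw [div_eq_div_iff (ne_of_gt hcpos) (ne_of_gt hcpos)]
  ring
end

section
/- For every real z > 0, lim_{ρ→1⁻} (ρ;ρ)_∞ / (z^{ln ρ / ln(1-ρ)} ρ ; ρ)_∞ = z, where (a;ρ)_∞ = ∏_{j=0}^∞ (1 - a ρ^j). -/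
open Filter Set

open Real in
private lemma qp_tprod_eq_exp_tsum {a : ℕ → ℝ} (h : ∀ j, 0 < a j)
    (hs : Summable fun j => Real.log (a j)) :
    ∏' j, a j = Real.exp (∑' j, Real.log (a j)) := by
  have := Real.rexp_tsum_eq_tprod h hs
  exact this.symm

private lemma qp_key {ρ a b w₁ w₂ : ℝ} (hρ0 : 0 < ρ) (hρ1 : ρ < 1) (ha : 0 < a) (hb : 0 < b)
    (hw₁ : 0 ≤ w₁) (hw₂ : 0 ≤ w₂) (hw : w₁ + w₂ = 1) :
    w₁ * Real.log (1 - ρ ^ a) + w₂ * Real.log (1 - ρ ^ b) ≤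
      Real.log (1 - ρ ^ (w₁ * a + w₂ * b)) := by
  have hA1 : ρ ^ a < 1 := Real.rpow_lt_one hρ0.le hρ1 ha
  have hB1 : ρ ^ b < 1 := Real.rpow_lt_one hρ0.le hρ1 hb
  have hA0 : 0 < ρ ^ a := Real.rpow_pos_of_pos hρ0 a
  have hB0 : 0 < ρ ^ b := Real.rpow_pos_of_pos hρ0 b
  have h1 : ρ ^ (w₁ * a + w₂ * b) = (ρ ^ a) ^ w₁ * (ρ ^ b) ^ w₂ := by
    rw [Real.rpow_add hρ0, mul_comm w₁ a, mul_comm w₂ b, Real.rpow_mul hρ0.le,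
      Real.rpow_mul hρ0.le]
  have g1 : (ρ ^ a) ^ w₁ * (ρ ^ b) ^ w₂ ≤ w₁ * ρ ^ a + w₂ * ρ ^ b :=
    Real.geom_mean_le_arith_mean2_weighted hw₁ hw₂ hA0.le hB0.le hw
  have g2 : (1 - ρ ^ a) ^ w₁ * (1 - ρ ^ b) ^ w₂ ≤ w₁ * (1 - ρ ^ a) + w₂ * (1 - ρ ^ b) :=
    Real.geom_mean_le_arith_mean2_weighted hw₁ hw₂ (by linarith) (by linarith) hw
  have hP0 : 0 < (1 - ρ ^ a) ^ w₁ * (1 - ρ ^ b) ^ w₂ :=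
    mul_pos (Real.rpow_pos_of_pos (by linarith) _) (Real.rpow_pos_of_pos (by linarith) _)
  have h2 : (1 - ρ ^ a) ^ w₁ * (1 - ρ ^ b) ^ w₂ ≤ 1 - ρ ^ (w₁ * a + w₂ * b) := by
    rw [h1]; linarith
  calc w₁ * Real.log (1 - ρ ^ a) + w₂ * Real.log (1 - ρ ^ b)
      = Real.log ((1 - ρ ^ a) ^ w₁ * (1 - ρ ^ b) ^ w₂) := by
        rw [Real.log_mul (Real.rpow_pos_of_pos (by linarith) _).ne' (Real.rpow_pos_of_pos (by linarith) _).ne', Real.log_rpow (by linarith),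
          Real.log_rpow (by linarith)]
    _ ≤ Real.log (1 - ρ ^ (w₁ * a + w₂ * b)) := Real.log_le_log hP0 h2

private lemma qp_summable_log {ρ : ℝ} (hρ0 : 0 < ρ) (hρ1 : ρ < 1) {c : ℝ} (hc : 0 < c) :
    Summable (fun j : ℕ => Real.log (1 - ρ ^ ((j : ℝ) + c))) := by
  rw [← summable_neg_iff]
  have hcpos : ∀ j : ℕ, 0 < 1 - ρ ^ ((j : ℝ) + c) := by
    intro j
    have : ρ ^ ((j : ℝ) + c) < 1 :=
      Real.rpow_lt_one hρ0.le hρ1 (by positivity)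
    linarith
  have hle : ∀ j : ℕ, ρ ^ ((j : ℝ) + c) ≤ ρ ^ c := fun j =>
    Real.rpow_le_rpow_of_exponent_ge hρ0 hρ1.le (le_add_of_nonneg_left (Nat.cast_nonneg j))
  have hc1 : ρ ^ c < 1 := Real.rpow_lt_one hρ0.le hρ1 hc
  apply Summable.of_nonneg_of_le
    (fun j => by
      have := hcpos j
      have h1 : Real.log (1 - ρ ^ ((j : ℝ) + c)) ≤ 0 := Real.log_nonpos (by linarith)
        (by nlinarith [Real.rpow_pos_of_pos hρ0 ((j : ℝ) + c)])
      linarith)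
    (f := fun j => (ρ ^ c / (1 - ρ ^ c)) * ρ ^ j)
    (fun j => by
      have hu0 : 0 < ρ ^ ((j : ℝ) + c) := Real.rpow_pos_of_pos hρ0 _
      have hu1 := hcpos j
      have h1 : -Real.log (1 - ρ ^ ((j : ℝ) + c)) = Real.log (1 - ρ ^ ((j : ℝ) + c))⁻¹ := by
        rw [Real.log_inv]
      rw [h1]
      have h2 : Real.log (1 - ρ ^ ((j : ℝ) + c))⁻¹ ≤ (1 - ρ ^ ((j : ℝ) + c))⁻¹ - 1 :=
        Real.log_le_sub_one_of_pos (by positivity)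
      have h3 : (1 - ρ ^ ((j : ℝ) + c))⁻¹ - 1
          = ρ ^ ((j : ℝ) + c) / (1 - ρ ^ ((j : ℝ) + c)) := by
        field_simp
        ring
      have h4 : ρ ^ ((j : ℝ) + c) / (1 - ρ ^ ((j : ℝ) + c)) ≤ ρ ^ ((j : ℝ) + c) / (1 - ρ ^ c) := by
        apply div_le_div_of_nonneg_left hu0.le (by linarith) (by nlinarith [hle j])
      have h5 : ρ ^ ((j : ℝ) + c) = ρ ^ c * ρ ^ j := by
        rw [add_comm, Real.rpow_add hρ0, Real.rpow_natCast]
      calc Real.log (1 - ρ ^ ((j : ℝ) + c))⁻¹ ≤ ρ ^ ((j : ℝ) + c) / (1 - ρ ^ ((j : ℝ) + c)) := by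
            rw [← h3]; exact h2
        _ ≤ ρ ^ ((j : ℝ) + c) / (1 - ρ ^ c) := h4
        _ = (ρ ^ c / (1 - ρ ^ c)) * ρ ^ j := by rw [h5]; ring)
    ((summable_geometric_of_lt_one hρ0.le hρ1).mul_left _)

private lemma qp_telescope {L : ℕ → ℝ} (hL : Summable L) :
    HasSum (fun j : ℕ => L (j + 1) - L j) (-L 0) := by
  have hs : Summable (fun j : ℕ => L (j + 1) - L j) :=
    ((summable_nat_add_iff 1).2 hL).sub hL
  rw [hs.hasSum_iff_tendsto_nat]
  have h1 : ∀ n : ℕ, ∑ i ∈ Finset.range n, (L (i + 1) - L i) = L n - L 0 :=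
    fun n => Finset.sum_range_sub L n
  simp only [h1]
  simpa using (hL.tendsto_atTop_zero).sub_const (L 0)

private lemma qp_bounds_pos {ρ y : ℝ} (hρ0 : 0 < ρ) (hρ1 : ρ < 1) (hy0 : 0 < y)
    (hy : y ≤ 1 / 2) :
    Summable (fun j : ℕ => Real.log (1 - ρ ^ ((j : ℝ) + 1)) -
        Real.log (1 - ρ ^ ((j : ℝ) + 1 - y)))
    ∧ y * (-Real.log (1 - ρ)) ≤ ∑' j : ℕ, (Real.log (1 - ρ ^ ((j : ℝ) + 1)) -
        Real.log (1 - ρ ^ ((j : ℝ) + 1 - y)))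
    ∧ ∑' j : ℕ, (Real.log (1 - ρ ^ ((j : ℝ) + 1)) -
        Real.log (1 - ρ ^ ((j : ℝ) + 1 - y)))
      ≤ y * (-Real.log (1 - ρ)) - Real.log (1 - y) := by
  set L : ℕ → ℝ := fun j => Real.log (1 - ρ ^ ((j : ℝ) + 1)) with hLdef
  set d : ℕ → ℝ := fun j => L j - Real.log (1 - ρ ^ ((j : ℝ) + 1 - y)) with hddef
  have hLcast : ∀ j : ℕ, L (j + 1) = Real.log (1 - ρ ^ ((j : ℝ) + 2)) := by
    intro j; simp only [hLdef]; push_cast; ring_nf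
  have hL0 : L 0 = Real.log (1 - ρ) := by
    simp only [hLdef]; norm_num
  have hpos : ∀ s : ℝ, 0 < s → 0 < 1 - ρ ^ s := fun s hs => by
    have := Real.rpow_lt_one hρ0.le hρ1 hs; linarith
  -- nonnegativity of d
  have hd0 : ∀ j, 0 ≤ d j := by
    intro j
    have h1 : ρ ^ ((j : ℝ) + 1) ≤ ρ ^ ((j : ℝ) + 1 - y) :=
      Real.rpow_le_rpow_of_exponent_ge hρ0 hρ1.le (by linarith)
    have h2 : 0 < 1 - ρ ^ ((j : ℝ) + 1 - y) := hpos _ (by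
      have : (0:ℝ) ≤ j := Nat.cast_nonneg j
      linarith)
    have := Real.log_le_log h2 (by linarith : 1 - ρ ^ ((j : ℝ) + 1 - y) ≤ 1 - ρ ^ ((j : ℝ) + 1))
    simp only [hddef]; linarith
  -- lower bound termwise
  have hlow : ∀ j, y * (L (j + 1) - L j) ≤ d j := by
    intro j
    have hj : (0:ℝ) ≤ j := Nat.cast_nonneg j
    have key := qp_key (a := (j : ℝ) + 1 - y) (b := (j : ℝ) + 2)
      (w₁ := 1 / (1 + y)) (w₂ := y / (1 + y)) hρ0 hρ1 (by linarith) (by linarith)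
      (by positivity) (by positivity) (by field_simp)
    have hcomb : (1 / (1 + y)) * ((j : ℝ) + 1 - y) + (y / (1 + y)) * ((j : ℝ) + 2)
        = (j : ℝ) + 1 := by field_simp; ring
    rw [hcomb] at key
    rw [hLcast j]
    simp only [hddef, hLdef]
    have h1y : (0:ℝ) < 1 + y := by linarith
    -- key : (1/(1+y)) * log(1-ρ^(j+1-y)) + (y/(1+y)) * log(1-ρ^(j+2)) ≤ log(1-ρ^(j+1))
    have := mul_le_mul_of_nonneg_left key h1y.le
    rw [mul_add] at this
    have e1 : (1 + y) * (1 / (1 + y) * Real.log (1 - ρ ^ ((j:ℝ) + 1 - y)))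
        = Real.log (1 - ρ ^ ((j:ℝ) + 1 - y)) := by field_simp
    have e2 : (1 + y) * (y / (1 + y) * Real.log (1 - ρ ^ ((j:ℝ) + 2)))
        = y * Real.log (1 - ρ ^ ((j:ℝ) + 2)) := by field_simp
    rw [e1, e2] at this
    nlinarith [this]
  -- upper bound termwise, successor case
  have hupp : ∀ j : ℕ, d (j + 1) ≤ y * (L (j + 1) - L j) := by
    intro j
    have hj : (0:ℝ) ≤ j := Nat.cast_nonneg j
    have key := qp_key (a := (j : ℝ) + 2) (b := (j : ℝ) + 1)
      (w₁ := 1 - y) (w₂ := y) hρ0 hρ1 (by linarith) (by linarith)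
      (by linarith) hy0.le (by ring)
    have hcomb : (1 - y) * ((j : ℝ) + 2) + y * ((j : ℝ) + 1) = ((j : ℝ) + 1) + 1 - y := by ring
    rw [hcomb] at key
    have hd1 : d (j + 1) = Real.log (1 - ρ ^ ((j : ℝ) + 2))
        - Real.log (1 - ρ ^ (((j : ℝ) + 1) + 1 - y)) := by
      simp only [hddef, hLdef]; push_cast; ring_nf
    rw [hd1, hLcast j]
    simp only [hLdef]
    nlinarith [key]
  -- upper bound at 0
  have hupp0 : d 0 ≤ -Real.log (1 - y) := by
    have hgm : ρ ^ (1 - y) * 1 ^ y ≤ (1 - y) * ρ + y * 1 :=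
      Real.geom_mean_le_arith_mean2_weighted (by linarith) hy0.le hρ0.le zero_le_one
        (by ring)
    rw [Real.one_rpow, mul_one, mul_one] at hgm
    have h2 : (1 - y) * (1 - ρ) ≤ 1 - ρ ^ (1 - y) := by nlinarith
    have hp : 0 < (1 - y) * (1 - ρ) := by nlinarith
    have h3 : Real.log ((1 - y) * (1 - ρ)) ≤ Real.log (1 - ρ ^ (1 - y)) :=
      Real.log_le_log hp h2
    rw [Real.log_mul (by nlinarith) (by nlinarith)] at h3
    have hd00 : d 0 = Real.log (1 - ρ) - Real.log (1 - ρ ^ (1 - y)) := by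
      simp only [hddef, hLdef]; norm_num
    rw [hd00]
    linarith
  -- sums
  have hLsum : Summable L := qp_summable_log hρ0 hρ1 one_pos
  have ht : HasSum (fun j => L (j + 1) - L j) (-L 0) := qp_telescope hLsum
  have hg : HasSum (fun j => y * (L (j + 1) - L j)) (y * -L 0) := ht.mul_left y
  set u : ℕ → ℝ := fun j => Nat.casesOn j (-Real.log (1 - y)) (fun i => y * (L (i + 1) - L i))
    with hudef
  have hu : HasSum u (y * -L 0 + -Real.log (1 - y)) := by
    have h1 : HasSum (fun n => u (n + 1)) (y * -L 0) := hg
    have := (hasSum_nat_add_iff (f := u) 1).1 h1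
    rw [Finset.sum_range_one] at this
    exact this
  have hdle : ∀ j, d j ≤ u j := by
    intro j
    cases j with
    | zero => exact hupp0
    | succ i => exact hupp i
  have hds : Summable d := Summable.of_nonneg_of_le hd0 hdle hu.summable
  refine ⟨hds, ?_, ?_⟩
  · have := hg.summable.tsum_le_tsum hlow hds
    rw [hg.tsum_eq] at this
    rw [hL0] at this
    simpa only [hddef, hLdef, mul_neg] using this
  · have := hds.tsum_le_tsum hdle hu.summable
    rw [hu.tsum_eq, hL0] at this
    simp only [hddef, hLdef] at this ⊢
    linarith

private lemma qp_bounds_neg {ρ x : ℝ} (hρ0 : 0 < ρ) (hρ1 : ρ < 1) (hx0 : 0 < x)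
    (hx : x ≤ 1 / 2) :
    Summable (fun j : ℕ => Real.log (1 - ρ ^ ((j : ℝ) + 1 + x)) -
        Real.log (1 - ρ ^ ((j : ℝ) + 1)))
    ∧ x * (-Real.log (1 - ρ)) ≤ ∑' j : ℕ, (Real.log (1 - ρ ^ ((j : ℝ) + 1 + x)) -
        Real.log (1 - ρ ^ ((j : ℝ) + 1)))
    ∧ ∑' j : ℕ, (Real.log (1 - ρ ^ ((j : ℝ) + 1 + x)) -
        Real.log (1 - ρ ^ ((j : ℝ) + 1)))
      ≤ x * (-Real.log (1 - ρ)) + Real.log (1 + x) := by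
  set L : ℕ → ℝ := fun j => Real.log (1 - ρ ^ ((j : ℝ) + 1)) with hLdef
  set d : ℕ → ℝ := fun j => Real.log (1 - ρ ^ ((j : ℝ) + 1 + x)) - L j with hddef
  have hLcast : ∀ j : ℕ, L (j + 1) = Real.log (1 - ρ ^ ((j : ℝ) + 2)) := by
    intro j; simp only [hLdef]; push_cast; ring_nf
  have hL0 : L 0 = Real.log (1 - ρ) := by
    simp only [hLdef]; norm_num
  have hpos : ∀ s : ℝ, 0 < s → 0 < 1 - ρ ^ s := fun s hs => by
    have := Real.rpow_lt_one hρ0.le hρ1 hs; linarith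
  have hd0 : ∀ j, 0 ≤ d j := by
    intro j
    have hj : (0:ℝ) ≤ j := Nat.cast_nonneg j
    have h1 : ρ ^ ((j : ℝ) + 1 + x) ≤ ρ ^ ((j : ℝ) + 1) :=
      Real.rpow_le_rpow_of_exponent_ge hρ0 hρ1.le (by linarith)
    have h2 : 0 < 1 - ρ ^ ((j : ℝ) + 1) := hpos _ (by linarith)
    have := Real.log_le_log h2 (by linarith : 1 - ρ ^ ((j : ℝ) + 1) ≤ 1 - ρ ^ ((j : ℝ) + 1 + x))
    simp only [hddef, hLdef]; linarith
  have hlow : ∀ j, x * (L (j + 1) - L j) ≤ d j := by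
    intro j
    have hj : (0:ℝ) ≤ j := Nat.cast_nonneg j
    have key := qp_key (a := (j : ℝ) + 1) (b := (j : ℝ) + 2)
      (w₁ := 1 - x) (w₂ := x) hρ0 hρ1 (by linarith) (by linarith)
      (by linarith) hx0.le (by ring)
    have hcomb : (1 - x) * ((j : ℝ) + 1) + x * ((j : ℝ) + 2) = (j : ℝ) + 1 + x := by ring
    rw [hcomb] at key
    rw [hLcast j]
    simp only [hddef, hLdef]
    nlinarith [key]
  have hupp : ∀ j : ℕ, d (j + 1) ≤ x * (L (j + 1) - L j) := by
    intro j
    have hj : (0:ℝ) ≤ j := Nat.cast_nonneg j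
    have key := qp_key (a := (j : ℝ) + 2 + x) (b := (j : ℝ) + 1)
      (w₁ := 1 / (1 + x)) (w₂ := x / (1 + x)) hρ0 hρ1 (by linarith) (by linarith)
      (by positivity) (by positivity) (by field_simp)
    have hcomb : (1 / (1 + x)) * ((j : ℝ) + 2 + x) + (x / (1 + x)) * ((j : ℝ) + 1)
        = (j : ℝ) + 2 := by field_simp; ring
    rw [hcomb] at key
    have hd1 : d (j + 1) = Real.log (1 - ρ ^ ((j : ℝ) + 2 + x))
        - Real.log (1 - ρ ^ ((j : ℝ) + 2)) := by
      simp only [hddef, hLdef]; push_cast; ring_nf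
    rw [hd1, hLcast j]
    simp only [hLdef]
    have h1x : (0:ℝ) < 1 + x := by linarith
    have := mul_le_mul_of_nonneg_left key h1x.le
    rw [mul_add] at this
    have e1 : (1 + x) * (1 / (1 + x) * Real.log (1 - ρ ^ ((j:ℝ) + 2 + x)))
        = Real.log (1 - ρ ^ ((j:ℝ) + 2 + x)) := by field_simp
    have e2 : (1 + x) * (x / (1 + x) * Real.log (1 - ρ ^ ((j:ℝ) + 1)))
        = x * Real.log (1 - ρ ^ ((j:ℝ) + 1)) := by field_simp
    rw [e1, e2] at this
    nlinarith [this]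
  have hupp0 : d 0 ≤ Real.log (1 + x) := by
    have hb : 1 + (1 + x) * (ρ - 1) ≤ (1 + (ρ - 1)) ^ (1 + x) :=
      one_add_mul_self_le_rpow_one_add (by linarith) (by linarith)
    have hb' : 1 - ρ ^ (1 + x) ≤ (1 + x) * (1 - ρ) := by
      have : (1:ℝ) + (ρ - 1) = ρ := by ring
      rw [this] at hb; nlinarith
    have hp : 0 < 1 - ρ ^ (1 + x) := hpos _ (by linarith)
    have h3 : Real.log (1 - ρ ^ (1 + x)) ≤ Real.log ((1 + x) * (1 - ρ)) :=
      Real.log_le_log hp hb'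
    rw [Real.log_mul (by linarith) (by nlinarith)] at h3
    have hd00 : d 0 = Real.log (1 - ρ ^ (1 + x)) - Real.log (1 - ρ) := by
      simp only [hddef, hLdef]; norm_num
    rw [hd00]
    linarith
  have hLsum : Summable L := qp_summable_log hρ0 hρ1 one_pos
  have ht : HasSum (fun j => L (j + 1) - L j) (-L 0) := qp_telescope hLsum
  have hg : HasSum (fun j => x * (L (j + 1) - L j)) (x * -L 0) := ht.mul_left x
  set u : ℕ → ℝ := fun j => Nat.casesOn j (Real.log (1 + x)) (fun i => x * (L (i + 1) - L i))
    with hudef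
  have hu : HasSum u (x * -L 0 + Real.log (1 + x)) := by
    have h1 : HasSum (fun n => u (n + 1)) (x * -L 0) := hg
    have := (hasSum_nat_add_iff (f := u) 1).1 h1
    rw [Finset.sum_range_one] at this
    exact this
  have hdle : ∀ j, d j ≤ u j := by
    intro j
    cases j with
    | zero => exact hupp0
    | succ i => exact hupp i
  have hds : Summable d := Summable.of_nonneg_of_le hd0 hdle hu.summable
  refine ⟨hds, ?_, ?_⟩
  · have := hg.summable.tsum_le_tsum hlow hds
    rw [hg.tsum_eq, hL0] at this
    simpa only [hddef, hLdef, mul_neg] using this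
  · have := hds.tsum_le_tsum hdle hu.summable
    rw [hu.tsum_eq, hL0] at this
    simp only [hddef, hLdef] at this ⊢
    linarith

private lemma qp_ratio_eq {ρ x : ℝ} (hρ0 : 0 < ρ) (hρ1 : ρ < 1) (hx : |x| ≤ 1 / 2) :
    (∏' j : ℕ, (1 - ρ ^ (j + 1))) / (∏' j : ℕ, (1 - ρ ^ x * ρ ^ (j + 1)))
      = Real.exp (∑' j : ℕ, (Real.log (1 - ρ ^ ((j : ℝ) + 1)) -
          Real.log (1 - ρ ^ ((j : ℝ) + 1 + x)))) := by
  have hx1 : -(1/2 : ℝ) ≤ x := (abs_le.1 hx).1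
  have hx2 : x ≤ 1/2 := (abs_le.1 hx).2
  have hpos : ∀ s : ℝ, 0 < s → 0 < 1 - ρ ^ s := fun s hs => by
    have := Real.rpow_lt_one hρ0.le hρ1 hs; linarith
  have e1 : ∀ j : ℕ, (1 - ρ ^ (j + 1) : ℝ) = 1 - ρ ^ ((j : ℝ) + 1) := by
    intro j
    have h : ((j : ℝ) + 1) = ((j + 1 : ℕ) : ℝ) := by push_cast; ring
    rw [h, Real.rpow_natCast]
  have e2 : ∀ j : ℕ, (1 - ρ ^ x * ρ ^ (j + 1) : ℝ) = 1 - ρ ^ ((j : ℝ) + 1 + x) := by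
    intro j
    have h : ρ ^ ((j : ℝ) + 1 + x) = ρ ^ x * ρ ^ ((j : ℝ) + 1) := by
      rw [← Real.rpow_add hρ0]; ring_nf
    have h2 : ((j : ℝ) + 1) = ((j + 1 : ℕ) : ℝ) := by push_cast; ring
    rw [h, h2, Real.rpow_natCast]
  have hsumL : Summable (fun j : ℕ => Real.log (1 - ρ ^ ((j : ℝ) + 1))) :=
    qp_summable_log hρ0 hρ1 one_pos
  have hsumM : Summable (fun j : ℕ => Real.log (1 - ρ ^ ((j : ℝ) + 1 + x))) := by
    have := qp_summable_log hρ0 hρ1 (show (0:ℝ) < 1 + x by linarith)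
    simpa [← add_assoc] using this
  rw [tprod_congr e1, tprod_congr e2,
    qp_tprod_eq_exp_tsum (fun j => hpos _ (by positivity)) hsumL,
    qp_tprod_eq_exp_tsum (fun j => hpos _ (by
      have : (0:ℝ) ≤ j := Nat.cast_nonneg j
      linarith)) hsumM,
    ← Real.exp_sub, ← hsumL.tsum_sub hsumM]

theorem qPochhammer_limit (z : ℝ) (hz : 0 < z) :
    Tendsto
      (fun ρ : ℝ =>
        (∏' j : ℕ, (1 - ρ ^ (j + 1))) /
          ∏' j : ℕ, (1 - z ^ (Real.log ρ / Real.log (1 - ρ)) * ρ ^ (j + 1)))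
      (nhdsWithin 1 (Set.Iio 1)) (nhds z) := by
  have hIoo : Ioo (0:ℝ) 1 ∈ nhdsWithin (1:ℝ) (Set.Iio 1) :=
    Ioo_mem_nhdsLT_of_mem ⟨zero_lt_one, le_refl 1⟩
  have hlogTop : Tendsto (fun ρ : ℝ => -Real.log (1 - ρ)) (nhdsWithin 1 (Set.Iio 1)) atTop := by
    have h1 : Tendsto (fun ρ : ℝ => 1 - ρ) (nhdsWithin 1 (Set.Iio 1)) (nhdsWithin 0 (Set.Ioi 0)) := by
      apply tendsto_nhdsWithin_of_tendsto_nhds_of_eventually_within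
      · have h0 : Continuous (fun ρ : ℝ => 1 - ρ) := continuous_const.sub continuous_id
        have h : Tendsto (fun ρ : ℝ => 1 - ρ) (nhds 1) (nhds 0) := by
          have := h0.tendsto (1:ℝ)
          simpa using this
        exact h.mono_left nhdsWithin_le_nhds
      · filter_upwards [self_mem_nhdsWithin] with ρ hρ
        exact sub_pos.2 (mem_Iio.mp hρ)
    have h2 := Real.tendsto_log_nhdsGT_zero.comp h1
    have h3 : Tendsto (fun ρ : ℝ => Real.log (1 - ρ)) (nhdsWithin 1 (Set.Iio 1)) atBot := h2
    exact tendsto_neg_atTop_iff.mpr h3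
  -- continuity helper
  have hlogcont : Tendsto (fun w : ℝ => Real.log (1 - w)) (nhds 0) (nhds 0) := by
    have h := (Real.continuousAt_log (by norm_num : (1:ℝ) - 0 ≠ 0)).comp
      ((continuous_const.sub continuous_id).continuousAt (x := (0:ℝ)))
    have := h.tendsto
    simpa [Function.comp_def] using this
  rcases lt_trichotomy z 1 with hz1 | rfl | hz1
  · -- z < 1
    set t := Real.log z with htdef
    have ht : t < 0 := Real.log_neg hz hz1
    set w : ℝ → ℝ := fun ρ => (-t) / (-Real.log (1 - ρ)) with hwdef
    have hwt : Tendsto w (nhdsWithin 1 (Set.Iio 1)) (nhds 0) :=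
      tendsto_const_nhds.div_atTop hlogTop
    have hev : ∀ᶠ ρ in nhdsWithin 1 (Set.Iio 1), w ρ < 1/2 :=
      hwt.eventually_lt_const (by norm_num)
    set F : ℝ → ℝ := fun ρ => ∑' j : ℕ, (Real.log (1 - ρ ^ ((j : ℝ) + 1)) -
      Real.log (1 - ρ ^ ((j : ℝ) + 1 + w ρ))) with hFdef
    have hbase : ∀ ρ : ℝ, ρ ∈ Ioo (0:ℝ) 1 → w ρ < 1/2 →
        0 < ρ ∧ ρ < 1 ∧ Real.log (1 - ρ) < 0 ∧ 0 < w ρ ∧ w ρ ≤ 1/2 := by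
      intro ρ hρ hw2
      have hρ0 := hρ.1; have hρ1 := hρ.2
      have hlneg : Real.log (1 - ρ) < 0 := Real.log_neg (by linarith) (by linarith)
      exact ⟨hρ0, hρ1, hlneg, div_pos (by linarith) (by linarith), hw2.le⟩
    have hFbounds : ∀ᶠ ρ in nhdsWithin 1 (Set.Iio 1),
        t - Real.log (1 + w ρ) ≤ F ρ ∧ F ρ ≤ t := by
      filter_upwards [hIoo, hev] with ρ hρ hw2
      obtain ⟨hρ0, hρ1, hlneg, hw0, hwle⟩ := hbase ρ hρ hw2
      obtain ⟨hsum, hlb, hub⟩ := qp_bounds_neg hρ0 hρ1 hw0 hwle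
      have hwl : w ρ * (-Real.log (1 - ρ)) = -t := div_mul_cancel₀ _ (by linarith)
      rw [hwl] at hlb hub
      have hFT : F ρ = -∑' j : ℕ, (Real.log (1 - ρ ^ ((j : ℝ) + 1 + w ρ)) -
          Real.log (1 - ρ ^ ((j : ℝ) + 1))) := by
        rw [hFdef, ← tsum_neg]
        exact tsum_congr (fun j => by ring)
      constructor
      · rw [hFT]; linarith
      · rw [hFT]; linarith
    have hlow_tend : Tendsto (fun ρ => t - Real.log (1 + w ρ))
        (nhdsWithin 1 (Set.Iio 1)) (nhds t) := by
      have h1 : Tendsto (fun ρ => Real.log (1 + w ρ)) (nhdsWithin 1 (Set.Iio 1)) (nhds 0) := by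
        have h2 : Tendsto (fun v : ℝ => Real.log (1 - v)) (nhds 0) (nhds 0) := hlogcont
        have hneg : Tendsto (fun ρ => -(w ρ)) (nhdsWithin 1 (Set.Iio 1)) (nhds 0) := by
          simpa using hwt.neg
        have h3 := h2.comp hneg
        have h4 : ((fun v : ℝ => Real.log (1 - v)) ∘ fun ρ => -(w ρ))
            = fun ρ => Real.log (1 + w ρ) := by
          funext ρ; simp [Function.comp, sub_neg_eq_add]
        rwa [h4] at h3
      simpa using (tendsto_const_nhds (x := t)).sub h1
    have hF : Tendsto F (nhdsWithin 1 (Set.Iio 1)) (nhds t) :=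
      tendsto_of_tendsto_of_tendsto_of_le_of_le' hlow_tend tendsto_const_nhds
        (hFbounds.mono fun ρ h => h.1) (hFbounds.mono fun ρ h => h.2)
    have hexp : Tendsto (fun ρ => Real.exp (F ρ)) (nhdsWithin 1 (Set.Iio 1)) (nhds z) := by
      have := (Real.continuous_exp.tendsto t).comp hF
      rwa [htdef, Real.exp_log hz] at this
    apply hexp.congr'
    filter_upwards [hIoo, hev] with ρ hρ hw2
    obtain ⟨hρ0, hρ1, hlneg, hw0, hwle⟩ := hbase ρ hρ hw2
    have hzpow : z ^ (Real.log ρ / Real.log (1 - ρ)) = ρ ^ (w ρ) := by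
      rw [Real.rpow_def_of_pos hz, Real.rpow_def_of_pos hρ0, hwdef]
      congr 1
      field_simp
      ring
    rw [hzpow, qp_ratio_eq hρ0 hρ1 (by rw [abs_of_pos hw0]; exact hwle)]
  · -- z = 1
    apply Tendsto.congr' ?_ (tendsto_const_nhds (x := (1:ℝ)))
    filter_upwards [hIoo] with ρ hρ
    have hρ0 := hρ.1; have hρ1 := hρ.2
    have h1 : (1:ℝ) ^ (Real.log ρ / Real.log (1 - ρ)) = ρ ^ (0:ℝ) := by
      rw [Real.one_rpow, Real.rpow_zero]
    rw [h1, qp_ratio_eq hρ0 hρ1 (by norm_num)]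
    have : ∀ j : ℕ, Real.log (1 - ρ ^ ((j : ℝ) + 1)) -
        Real.log (1 - ρ ^ ((j : ℝ) + 1 + 0)) = 0 := by
      intro j; rw [add_zero]; ring
    rw [tsum_congr this, tsum_zero, Real.exp_zero]
  · -- z > 1
    set t := Real.log z with htdef
    have ht : 0 < t := Real.log_pos hz1
    set w : ℝ → ℝ := fun ρ => t / (-Real.log (1 - ρ)) with hwdef
    have hwt : Tendsto w (nhdsWithin 1 (Set.Iio 1)) (nhds 0) :=
      tendsto_const_nhds.div_atTop hlogTop
    have hev : ∀ᶠ ρ in nhdsWithin 1 (Set.Iio 1), w ρ < 1/2 :=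
      hwt.eventually_lt_const (by norm_num)
    set F : ℝ → ℝ := fun ρ => ∑' j : ℕ, (Real.log (1 - ρ ^ ((j : ℝ) + 1)) -
      Real.log (1 - ρ ^ ((j : ℝ) + 1 + -(w ρ)))) with hFdef
    have hbase : ∀ ρ : ℝ, ρ ∈ Ioo (0:ℝ) 1 → w ρ < 1/2 →
        0 < ρ ∧ ρ < 1 ∧ Real.log (1 - ρ) < 0 ∧ 0 < w ρ ∧ w ρ ≤ 1/2 := by
      intro ρ hρ hw2
      have hρ0 := hρ.1; have hρ1 := hρ.2
      have hlneg : Real.log (1 - ρ) < 0 := Real.log_neg (by linarith) (by linarith)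
      exact ⟨hρ0, hρ1, hlneg, div_pos ht (by linarith), hw2.le⟩
    have hFbounds : ∀ᶠ ρ in nhdsWithin 1 (Set.Iio 1),
        t ≤ F ρ ∧ F ρ ≤ t - Real.log (1 - w ρ) := by
      filter_upwards [hIoo, hev] with ρ hρ hw2
      obtain ⟨hρ0, hρ1, hlneg, hw0, hwle⟩ := hbase ρ hρ hw2
      obtain ⟨hsum, hlb, hub⟩ := qp_bounds_pos hρ0 hρ1 hw0 hwle
      have hwl : w ρ * (-Real.log (1 - ρ)) = t := div_mul_cancel₀ _ (by linarith)
      rw [hwl] at hlb hub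
      simp only [sub_eq_add_neg] at hlb hub
      exact ⟨hlb, hub⟩
    have hupp_tend : Tendsto (fun ρ => t - Real.log (1 - w ρ))
        (nhdsWithin 1 (Set.Iio 1)) (nhds t) := by
      have h1 : Tendsto (fun ρ => Real.log (1 - w ρ)) (nhdsWithin 1 (Set.Iio 1)) (nhds 0) :=
        hlogcont.comp hwt
      simpa using (tendsto_const_nhds (x := t)).sub h1
    have hF : Tendsto F (nhdsWithin 1 (Set.Iio 1)) (nhds t) :=
      tendsto_of_tendsto_of_tendsto_of_le_of_le' tendsto_const_nhds hupp_tend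
        (hFbounds.mono fun ρ h => h.1) (hFbounds.mono fun ρ h => h.2)
    have hexp : Tendsto (fun ρ => Real.exp (F ρ)) (nhdsWithin 1 (Set.Iio 1)) (nhds z) := by
      have := (Real.continuous_exp.tendsto t).comp hF
      rwa [htdef, Real.exp_log hz] at this
    apply hexp.congr'
    filter_upwards [hIoo, hev] with ρ hρ hw2
    obtain ⟨hρ0, hρ1, hlneg, hw0, hwle⟩ := hbase ρ hρ hw2
    have hzpow : z ^ (Real.log ρ / Real.log (1 - ρ)) = ρ ^ (-(w ρ)) := by
      rw [Real.rpow_def_of_pos hz, Real.rpow_def_of_pos hρ0, hwdef]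
      congr 1
      field_simp
      ring
    rw [hzpow, qp_ratio_eq hρ0 hρ1 (by rw [abs_neg, abs_of_pos hw0]; exact hwle)]
end

section
/- Let ρ_n ∈ (0,1) with ρ_n → 1 and ∑_n 1/(ln(1-ρ_n))² < ∞. Let Y_n be independent random variables with Y_n distributed as (ln ρ_n / ln(1-ρ_n)) X_{ρ_n}, where X_{ρ_n} has mass function x ↦ ρ_n^x ∏_{j=0}^∞ (1-ρ_n^{x+1+j}) on ℕ. Then Y_n → 1 almost surely. -/
open Filter Set MeasureTheory ProbabilityTheory

lemma aux_log_summable {r : ℝ} (hr0 : 0 < r) (hr1 : r < 1) (c : ℕ) (hc : 1 ≤ c) :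
    Summable fun j : ℕ => Real.log (1 - r ^ (c + j)) := by
  have hrc : ∀ j : ℕ, r ^ (c + j) ≤ r := fun j => by
    calc r ^ (c + j) ≤ r ^ 1 := pow_le_pow_of_le_one hr0.le hr1.le (by omega)
    _ = r := pow_one r
  have hpos : ∀ j : ℕ, 0 < 1 - r ^ (c + j) := fun j =>
    sub_pos.2 (lt_of_le_of_lt (hrc j) hr1)
  have h1r : 0 < 1 - r := sub_pos.2 hr1
  apply Summable.of_norm_bounded (g := fun j => (r ^ c * (1 - r)⁻¹) * r ^ j)
  · exact (summable_geometric_of_lt_one hr0.le hr1).mul_left _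
  · intro j
    have hu0 : (0:ℝ) ≤ r ^ (c + j) := pow_nonneg hr0.le _
    rw [Real.norm_eq_abs, abs_of_nonpos (Real.log_nonpos (hpos j).le (by linarith))]
    have key := Real.log_le_sub_one_of_pos (x := (1 - r ^ (c + j))⁻¹) (inv_pos.2 (hpos j))
    rw [Real.log_inv] at key
    have h2 : (1 - r ^ (c + j))⁻¹ - 1 ≤ r ^ c * (1 - r)⁻¹ * r ^ j := by
      have e1 : (1 - r ^ (c + j)) * (1 - r ^ (c + j))⁻¹ = 1 := mul_inv_cancel₀ (hpos j).ne'
      have e2 : (1 - r) * (1 - r)⁻¹ = 1 := mul_inv_cancel₀ h1r.ne'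
      have e3 : r ^ c * r ^ j = r ^ (c + j) := (pow_add r c j).symm
      have hinv : (1 - r ^ (c + j))⁻¹ ≤ (1 - r)⁻¹ := by
        apply inv_anti₀ h1r
        linarith [hrc j]
      have hinvpos : (0:ℝ) < (1 - r ^ (c + j))⁻¹ := inv_pos.2 (hpos j)
      nlinarith
    linarith

lemma aux_tprod_eq {r : ℝ} (hr0 : 0 < r) (hr1 : r < 1) (c : ℕ) (hc : 1 ≤ c) :
    ∏' j : ℕ, (1 - r ^ (c + j)) = Real.exp (∑' j : ℕ, Real.log (1 - r ^ (c + j))) := by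
  have hpos : ∀ j : ℕ, 0 < 1 - r ^ (c + j) := fun j => by
    have : r ^ (c + j) ≤ r ^ 1 := pow_le_pow_of_le_one hr0.le hr1.le (by omega)
    rw [pow_one] at this; linarith
  have := Real.rexp_tsum_eq_tprod (f := fun j => 1 - r ^ (c + j))
    hpos (aux_log_summable hr0 hr1 c hc)
  exact this.symm

lemma aux_tprod_le_one {r : ℝ} (hr0 : 0 < r) (hr1 : r < 1) (c : ℕ) (hc : 1 ≤ c) :
    ∏' j : ℕ, (1 - r ^ (c + j)) ≤ 1 := by
  rw [aux_tprod_eq hr0 hr1 c hc, Real.exp_le_one_iff]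
  apply tsum_nonpos
  intro j
  exact Real.log_nonpos (by nlinarith [pow_le_one₀ hr0.le hr1.le (n := c+j)])
    (by nlinarith [pow_nonneg hr0.le (c+j)])

lemma aux_tprod_pos {r : ℝ} (hr0 : 0 < r) (hr1 : r < 1) (c : ℕ) (hc : 1 ≤ c) :
    0 < ∏' j : ℕ, (1 - r ^ (c + j)) := by
  rw [aux_tprod_eq hr0 hr1 c hc]; exact Real.exp_pos _

lemma aux_tprod_tail {r : ℝ} (hr0 : 0 < r) (hr1 : r < 1) {x m : ℕ} (hxm : x ≤ m) :
    ∏' j : ℕ, (1 - r ^ (x + 1 + j)) ≤ Real.exp (-(r ^ (m + 1) * (1 - r)⁻¹)) := by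
  rw [aux_tprod_eq hr0 hr1 (x + 1) (by omega)]
  apply Real.exp_le_exp.2
  have hs := aux_log_summable hr0 hr1 (x + 1) (by omega)
  have hsplit := Summable.sum_add_tsum_nat_add (f := fun j : ℕ => Real.log (1 - r ^ (x + 1 + j)))
    (m - x) hs
  rw [← hsplit]
  have hfirst : (∑ j ∈ Finset.range (m - x), Real.log (1 - r ^ (x + 1 + j))) ≤ 0 := by
    apply Finset.sum_nonpos
    intro j _
    exact Real.log_nonpos (by nlinarith [pow_le_one₀ hr0.le hr1.le (n := x+1+j)])
      (by nlinarith [pow_nonneg hr0.le (x+1+j)])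
  have htail : (∑' j : ℕ, Real.log (1 - r ^ (x + 1 + (j + (m - x))))) ≤
      -(r ^ (m + 1) * (1 - r)⁻¹) := by
    have hidx : ∀ j : ℕ, x + 1 + (j + (m - x)) = m + 1 + j := fun j => by omega
    have hgeo : Summable (fun j : ℕ => -(r ^ (m + 1) * r ^ j)) :=
      ((summable_geometric_of_lt_one hr0.le hr1).mul_left _).neg
    have hle : ∀ j : ℕ, Real.log (1 - r ^ (x + 1 + (j + (m - x)))) ≤ -(r ^ (m + 1) * r ^ j) := by
      intro j
      rw [hidx j, ← pow_add]
      have hpos : 0 < 1 - r ^ (m + 1 + j) := by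
        have : r ^ (m + 1 + j) ≤ r ^ 1 := pow_le_pow_of_le_one hr0.le hr1.le (by omega)
        rw [pow_one] at this; linarith
      have := Real.log_le_sub_one_of_pos hpos
      linarith
    have hsum2 : Summable (fun j : ℕ => Real.log (1 - r ^ (x + 1 + (j + (m - x))))) := by
      apply Summable.congr (aux_log_summable hr0 hr1 (m + 1) (by omega))
      intro j; rw [hidx j]
    calc (∑' j : ℕ, Real.log (1 - r ^ (x + 1 + (j + (m - x)))))
        ≤ ∑' j : ℕ, -(r ^ (m + 1) * r ^ j) := Summable.tsum_le_tsum hle hsum2 hgeo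
      _ = -(r ^ (m + 1) * (1 - r)⁻¹) := by
          rw [tsum_neg, tsum_mul_left, tsum_geometric_of_lt_one hr0.le hr1]
  linarith

lemma aux_upper_tail {Ω : Type*} [MeasurableSpace Ω] (μ : Measure Ω)
    (Y : Ω → ℕ) {r : ℝ} (hr0 : 0 < r) (hr1 : r < 1)
    (hd : ∀ x : ℕ, μ {ω | Y ω = x} =
      ENNReal.ofReal (r ^ x * ∏' j : ℕ, (1 - r ^ (x + 1 + j)))) (m : ℕ) :
    μ {ω | m ≤ Y ω} ≤ ENNReal.ofReal (r ^ m * (1 - r)⁻¹) := by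
  have hsub : {ω | m ≤ Y ω} ⊆ ⋃ x : ℕ, {ω | Y ω = m + x} := by
    intro ω hω
    have h : m ≤ Y ω := hω
    exact Set.mem_iUnion.2 ⟨Y ω - m, by simp only [Set.mem_setOf_eq]; omega⟩
  calc μ {ω | m ≤ Y ω} ≤ ∑' x : ℕ, μ {ω | Y ω = m + x} :=
        le_trans (measure_mono hsub) (measure_iUnion_le _)
    _ ≤ ∑' x : ℕ, ENNReal.ofReal (r ^ (m + x)) := by
        apply ENNReal.tsum_le_tsum
        intro x
        rw [hd (m + x)]
        apply ENNReal.ofReal_le_ofReal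
        exact mul_le_of_le_one_right (pow_nonneg hr0.le _)
          (aux_tprod_le_one hr0 hr1 (m + x + 1) (by omega))
    _ = ENNReal.ofReal (∑' x : ℕ, r ^ (m + x)) := by
        rw [ENNReal.ofReal_tsum_of_nonneg (fun x => pow_nonneg hr0.le _)]
        exact ((summable_geometric_of_lt_one hr0.le hr1).mul_left (r ^ m)).congr
          (fun j => (pow_add r m j).symm)
    _ = ENNReal.ofReal (r ^ m * (1 - r)⁻¹) := by
        congr 1
        calc (∑' x : ℕ, r ^ (m + x)) = ∑' x : ℕ, r ^ m * r ^ x := by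
              exact tsum_congr fun x => pow_add r m x
          _ = r ^ m * (1 - r)⁻¹ := by
              rw [tsum_mul_left, tsum_geometric_of_lt_one hr0.le hr1]

lemma aux_lower_tail {Ω : Type*} [MeasurableSpace Ω] (μ : Measure Ω)
    (Y : Ω → ℕ) {r : ℝ} (hr0 : 0 < r) (hr1 : r < 1)
    (hd : ∀ x : ℕ, μ {ω | Y ω = x} =
      ENNReal.ofReal (r ^ x * ∏' j : ℕ, (1 - r ^ (x + 1 + j)))) (m : ℕ) :
    μ {ω | Y ω ≤ m} ≤
      ENNReal.ofReal (Real.exp (-(r ^ (m + 1) * (1 - r)⁻¹)) * (1 - r)⁻¹) := by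
  have h1r : (0:ℝ) < 1 - r := by linarith
  set E := Real.exp (-(r ^ (m + 1) * (1 - r)⁻¹)) with hE
  have hEpos : 0 < E := Real.exp_pos _
  have hsub : {ω | Y ω ≤ m} ⊆ ⋃ x ∈ Finset.range (m + 1), {ω | Y ω = x} := by
    intro ω hω
    simp only [Set.mem_iUnion]
    have h : Y ω ≤ m := hω
    exact ⟨Y ω, Finset.mem_range.2 (by omega), rfl⟩
  calc μ {ω | Y ω ≤ m} ≤ ∑ x ∈ Finset.range (m + 1), μ {ω | Y ω = x} :=
        le_trans (measure_mono hsub) (measure_biUnion_finset_le _ _)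
    _ ≤ ∑ x ∈ Finset.range (m + 1), ENNReal.ofReal (r ^ x * E) := by
        apply Finset.sum_le_sum
        intro x hx
        rw [hd x]
        apply ENNReal.ofReal_le_ofReal
        apply mul_le_mul_of_nonneg_left _ (pow_nonneg hr0.le _)
        exact aux_tprod_tail hr0 hr1 (Finset.mem_range_succ_iff.1 hx)
    _ = ENNReal.ofReal (∑ x ∈ Finset.range (m + 1), r ^ x * E) := by
        rw [ENNReal.ofReal_sum_of_nonneg]
        intro x _
        positivity
    _ ≤ ENNReal.ofReal (E * (1 - r)⁻¹) := by
        apply ENNReal.ofReal_le_ofReal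
        rw [← Finset.sum_mul]
        rw [mul_comm]
        apply mul_le_mul_of_nonneg_left _ hEpos.le
        calc (∑ i ∈ Finset.range (m + 1), r ^ i)
            ≤ ∑' i : ℕ, r ^ i := Summable.sum_le_tsum _ (fun i _ => pow_nonneg hr0.le i)
              (summable_geometric_of_lt_one hr0.le hr1)
          _ = (1 - r)⁻¹ := tsum_geometric_of_lt_one hr0.le hr1

lemma aux_measure_bound {Ω : Type*} [MeasurableSpace Ω] (μ : Measure Ω)
    (Y : Ω → ℕ) {r ε : ℝ} (hr0 : 0 < r) (hr1 : r < 1) (hr2 : 1/2 ≤ r)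
    (hε0 : 0 < ε) (hε1 : ε < 1)
    (hd : ∀ x : ℕ, μ {ω | Y ω = x} =
      ENNReal.ofReal (r ^ x * ∏' j : ℕ, (1 - r ^ (x + 1 + j)))) :
    μ {ω | ε < |Real.log r / Real.log (1 - r) * (Y ω : ℝ) - 1|} ≤
      ENNReal.ofReal ((1 - r) ^ ε) +
      ENNReal.ofReal (Real.exp (-((1 - r) ^ (-ε) / 2)) * (1 - r)⁻¹) := by
  set t := 1 - r with htdef
  have ht0 : 0 < t := by simp [htdef]; linarith
  have ht1 : t < 1 := by simp [htdef]; linarith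
  have hlogr : Real.log r < 0 := Real.log_neg hr0 hr1
  have hlogt : Real.log t < 0 := Real.log_neg ht0 ht1
  set L := Real.log t / Real.log r with hLdef
  have hL : 0 < L := div_pos_iff.2 (Or.inr ⟨hlogt, hlogr⟩)
  set c := Real.log r / Real.log t with hcdef
  have hc : 0 < c := div_pos_iff.2 (Or.inr ⟨hlogr, hlogt⟩)
  have hcL : c⁻¹ = L := by rw [hcdef, hLdef, inv_div]
  -- key rpow identity
  have hrL : r ^ (L : ℝ) = t := by
    rw [Real.rpow_def_of_pos hr0, hLdef, mul_div_cancel₀ _ (ne_of_lt hlogr),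
      Real.exp_log ht0]
  set mp := Nat.floor ((1 + ε) * L) + 1 with hmp
  set mm := Nat.floor ((1 - ε) * L) with hmm
  -- subset
  have hsub : {ω | ε < |Real.log r / Real.log t * (Y ω : ℝ) - 1|} ⊆
      {ω | mp ≤ Y ω} ∪ {ω | Y ω ≤ mm} := by
    intro ω hω
    have hω' : ε < |c * (Y ω : ℝ) - 1| := hω
    rcases lt_abs.1 hω' with h | h
    · left
      have h1 : (1 + ε) * L < (Y ω : ℝ) := by
        have h2 : (1 + ε) < c * (Y ω : ℝ) := by linarith
        have := (div_lt_iff₀' hc).2 h2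
        calc (1 + ε) * L = (1 + ε) / c := by rw [div_eq_mul_inv, hcL]
          _ < (Y ω : ℝ) := by linarith [this]
      have : Nat.floor ((1 + ε) * L) < Y ω :=
        (Nat.floor_lt (by positivity)).2 h1
      simpa [hmp] using this
    · right
      have h1 : (Y ω : ℝ) < (1 - ε) * L := by
        have h2 : c * (Y ω : ℝ) < 1 - ε := by linarith
        have := (lt_div_iff₀' hc).2 h2
        calc (Y ω : ℝ) < (1 - ε) / c := this
          _ = (1 - ε) * L := by rw [div_eq_mul_inv, hcL]
      exact Nat.le_floor h1.le
  have hup := aux_upper_tail μ Y hr0 hr1 hd mp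
  have hlo := aux_lower_tail μ Y hr0 hr1 hd mm
  -- real inequalities
  have hub : r ^ mp * (1 - r)⁻¹ ≤ t ^ ε := by
    have h1 : r ^ mp = r ^ (mp : ℝ) := (Real.rpow_natCast r mp).symm
    have h2 : (1 + ε) * L ≤ (mp : ℝ) := by
      push_cast [hmp]
      linarith [Nat.lt_floor_add_one ((1 + ε) * L)]
    have h3 : r ^ (mp : ℝ) ≤ r ^ ((1 + ε) * L) :=
      Real.rpow_le_rpow_of_exponent_ge hr0 hr1.le h2
    have h4 : r ^ ((1 + ε) * L) = t ^ (1 + ε) := by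
      rw [mul_comm, Real.rpow_mul hr0.le, hrL]
    have h5 : t ^ (1 + ε) = t ^ ε * t := by
      rw [add_comm, Real.rpow_add ht0, Real.rpow_one]
    have h6 : r ^ mp ≤ t ^ ε * t := by rw [h1]; rw [h4, h5] at h3; exact h3
    calc r ^ mp * (1 - r)⁻¹ = r ^ mp * t⁻¹ := rfl
      _ ≤ (t ^ ε * t) * t⁻¹ := by
          apply mul_le_mul_of_nonneg_right h6 (by positivity)
      _ = t ^ ε := by field_simp
  have hlb : Real.exp (-(r ^ (mm + 1) * (1 - r)⁻¹)) * (1 - r)⁻¹ ≤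
      Real.exp (-(t ^ (-ε) / 2)) * (1 - r)⁻¹ := by
    apply mul_le_mul_of_nonneg_right _ (by positivity)
    apply Real.exp_le_exp.2
    rw [neg_le_neg_iff]
    have h1 : r ^ (mm + 1) = r ^ ((mm : ℝ) + 1) := by
      rw [← Real.rpow_natCast r (mm + 1)]; push_cast; ring_nf
    have h2 : ((mm : ℝ) + 1) ≤ (1 - ε) * L + 1 := by
      have := Nat.floor_le (a := (1 - ε) * L) (mul_nonneg (by linarith) hL.le)
      rw [hmm]; linarith
    have h3 : r ^ ((1 - ε) * L + 1) ≤ r ^ ((mm : ℝ) + 1) :=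
      Real.rpow_le_rpow_of_exponent_ge hr0 hr1.le h2
    have h4 : r ^ ((1 - ε) * L + 1) = t ^ (1 - ε) * r := by
      rw [Real.rpow_add hr0, Real.rpow_one, mul_comm (1 - ε) L,
        Real.rpow_mul hr0.le, hrL]
    have h5 : t ^ (-ε) / 2 ≤ t ^ (1 - ε) * r * t⁻¹ := by
      have e1 : t ^ (1 - ε) * t⁻¹ = t ^ (-ε) := by
        rw [← Real.rpow_neg_one t, ← Real.rpow_add ht0]
        ring_nf
      have e2 : t ^ (1 - ε) * r * t⁻¹ = t ^ (-ε) * r := by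
        rw [mul_right_comm, e1]
      rw [e2]
      have : (0:ℝ) < t ^ (-ε) := Real.rpow_pos_of_pos ht0 _
      nlinarith
    calc t ^ (-ε) / 2 ≤ t ^ (1 - ε) * r * t⁻¹ := h5
      _ = r ^ ((1 - ε) * L + 1) * t⁻¹ := by rw [h4]
      _ ≤ r ^ ((mm : ℝ) + 1) * t⁻¹ := by
          apply mul_le_mul_of_nonneg_right h3 (by positivity)
      _ = r ^ (mm + 1) * (1 - r)⁻¹ := by rw [h1]
  calc μ {ω | ε < |Real.log r / Real.log (1 - r) * (Y ω : ℝ) - 1|}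
      ≤ μ ({ω | mp ≤ Y ω} ∪ {ω | Y ω ≤ mm}) := measure_mono hsub
    _ ≤ μ {ω | mp ≤ Y ω} + μ {ω | Y ω ≤ mm} := measure_union_le _ _
    _ ≤ ENNReal.ofReal ((1 - r) ^ ε) +
        ENNReal.ofReal (Real.exp (-((1 - r) ^ (-ε) / 2)) * (1 - r)⁻¹) := by
        gcongr
        · exact le_trans hup (ENNReal.ofReal_le_ofReal hub)
        · exact le_trans hlo (ENNReal.ofReal_le_ofReal hlb)

lemma aux_eventually_comparison {ε : ℝ} (hε0 : 0 < ε) (hε1 : ε < 1) :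
    ∀ᶠ t in nhdsWithin (0:ℝ) (Set.Ioi 0),
      t ^ ε + Real.exp (-(t ^ (-ε) / 2)) * t⁻¹ ≤ 2 * (1 / Real.log t ^ 2) := by
  have h0 : ∀ᶠ t in nhdsWithin (0:ℝ) (Set.Ioi 0), 0 < t := eventually_mem_nhdsWithin
  have h1 : ∀ᶠ t in nhdsWithin (0:ℝ) (Set.Ioi 0), t < 1 :=
    eventually_of_mem (nhdsWithin_le_nhds (isOpen_Iio.mem_nhds (by norm_num)))
      (fun t ht => ht)
  have habs : ∀ {r δ : ℝ}, 0 < r → 0 < δ →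
      ∀ᶠ t in nhdsWithin (0:ℝ) (Set.Ioi 0), |Real.log t * t ^ r| ≤ δ := by
    intro r δ hr hδ
    have := tendsto_log_mul_rpow_nhdsGT_zero hr (Metric.closedBall_mem_nhds (0:ℝ) hδ)
    filter_upwards [this] with t ht
    simpa only [Set.mem_preimage, Metric.mem_closedBall, Real.dist_eq, sub_zero] using ht
  have hb1 := habs (half_pos hε0) one_pos
  have hc1 := habs hε0 (by norm_num : (0:ℝ) < 1/4)
  have hd1 := habs (by norm_num : (0:ℝ) < 1/2) one_pos
  filter_upwards [h0, h1, hb1, hc1, hd1] with t ht0 ht1 htb htc htd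
  have hlt : Real.log t < 0 := Real.log_neg ht0 ht1
  have hl2 : 0 < Real.log t ^ 2 := by nlinarith
  have sq_le : ∀ {a : ℝ}, |a| ≤ 1 → a ^ 2 ≤ 1 := fun {a} h => by
    rw [← sq_abs]; exact pow_le_one₀ (abs_nonneg _) h
  have p1 : t ^ ε ≤ 1 / Real.log t ^ 2 := by
    rw [le_div_iff₀ hl2]
    have e : t ^ ε * Real.log t ^ 2 = (Real.log t * t ^ (ε/2))^2 := by
      rw [mul_pow, ← Real.rpow_natCast (t ^ (ε/2)) 2, ← Real.rpow_mul ht0.le]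
      norm_num
      ring
    rw [e]; exact sq_le htb
  have p2 : Real.exp (-(t ^ (-ε) / 2)) * t⁻¹ ≤ 1 / Real.log t ^ 2 := by
    have hb0 : (0:ℝ) < t ^ ε := Real.rpow_pos_of_pos ht0 _
    have habs' : |Real.log t| * t ^ ε ≤ 1/4 := by
      rw [← abs_of_pos hb0, ← abs_mul]; exact htc
    have hstep1 : 4 * |Real.log t| ≤ t ^ (-ε) := by
      rw [Real.rpow_neg ht0.le]
      have h4 : 4 * |Real.log t| * t ^ ε ≤ 1 := by nlinarith
      calc 4 * |Real.log t| = 4 * |Real.log t| * t ^ ε * (t ^ ε)⁻¹ := by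
            field_simp
        _ ≤ 1 * (t ^ ε)⁻¹ :=
            mul_le_mul_of_nonneg_right h4 (inv_nonneg.2 hb0.le)
        _ = (t ^ ε)⁻¹ := one_mul _
    have hstep2 : -(t ^ (-ε) / 2) ≤ 2 * Real.log t := by
      rw [abs_of_neg hlt] at hstep1; linarith
    have hstep3 : Real.exp (-(t ^ (-ε) / 2)) ≤ t ^ (2:ℝ) := by
      conv_rhs => rw [Real.rpow_def_of_pos ht0]
      apply Real.exp_le_exp.2
      linarith
    have hstep4 : t ^ (2:ℝ) * t⁻¹ = t := by
      rw [show (2:ℝ) = ((2:ℕ):ℝ) by norm_num, Real.rpow_natCast]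
      field_simp
    have hstep5 : t ≤ 1 / Real.log t ^ 2 := by
      rw [le_div_iff₀ hl2]
      have e : t * Real.log t ^ 2 = (Real.log t * t ^ ((1:ℝ)/2))^2 := by
        rw [mul_pow, ← Real.rpow_natCast (t ^ ((1:ℝ)/2)) 2, ← Real.rpow_mul ht0.le]
        norm_num
        ring
      rw [e]; exact sq_le htd
    calc Real.exp (-(t ^ (-ε) / 2)) * t⁻¹ ≤ t ^ (2:ℝ) * t⁻¹ := by
          apply mul_le_mul_of_nonneg_right hstep3 (by positivity)
      _ = t := hstep4
      _ ≤ 1 / Real.log t ^ 2 := hstep5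
  linarith

theorem scaled_as_convergence
    {Ω : Type*} [MeasurableSpace Ω] (μ : Measure Ω) [IsProbabilityMeasure μ]
    (ρ : ℕ → ℝ) (hρ : ∀ n, ρ n ∈ Set.Ioo (0:ℝ) 1)
    (hlim : Tendsto ρ atTop (nhds 1))
    (hsum : Summable fun n => 1 / (Real.log (1 - ρ n)) ^ 2)
    (X : ℕ → Ω → ℕ) (hmeas : ∀ n, Measurable (X n))
    (hind : iIndepFun X μ)
    (hdist : ∀ n x, μ {ω | X n ω = x} =
      ENNReal.ofReal ((ρ n) ^ x * ∏' j : ℕ, (1 - (ρ n) ^ (x + 1 + j)))) :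
    ∀ᵐ ω ∂μ,
      Tendsto (fun n => Real.log (ρ n) / Real.log (1 - ρ n) * (X n ω : ℝ))
        atTop (nhds 1) := by
  have ht0 : ∀ n, 0 < 1 - ρ n := fun n => sub_pos.2 (hρ n).2
  have htlim : Tendsto (fun n => 1 - ρ n) atTop (nhdsWithin (0:ℝ) (Set.Ioi 0)) := by
    apply tendsto_nhdsWithin_of_tendsto_nhds_of_eventually_within
    · have : Tendsto (fun n => 1 - ρ n) atTop (nhds (1 - 1)) :=
        tendsto_const_nhds.sub hlim
      simpa using this
    · exact Eventually.of_forall fun n => ht0 n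
  have key : ∀ k : ℕ, ∀ᵐ ω ∂μ, ∀ᶠ n in atTop,
      |Real.log (ρ n) / Real.log (1 - ρ n) * (X n ω : ℝ) - 1| ≤ ((k:ℝ)+2)⁻¹ := by
    intro k
    set ε : ℝ := ((k:ℝ)+2)⁻¹ with hε
    have hε0 : 0 < ε := by positivity
    have hε1 : ε < 1 := by
      apply inv_lt_one_of_one_lt₀
      have : (0:ℝ) ≤ (k:ℝ) := Nat.cast_nonneg k
      linarith
    set s : ℕ → Set Ω := fun n =>
      {ω | ε < |Real.log (ρ n) / Real.log (1 - ρ n) * (X n ω : ℝ) - 1|} with hs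
    have hev : ∀ᶠ n in atTop,
        μ (s n) ≤ ENNReal.ofReal (2 * (1 / Real.log (1 - ρ n) ^ 2)) := by
      have hhalf : ∀ᶠ n in atTop, 1/2 ≤ ρ n :=
        hlim.eventually (eventually_ge_nhds (by norm_num))
      have hcomp := htlim.eventually (aux_eventually_comparison hε0 hε1)
      filter_upwards [hhalf, hcomp] with n h2 hcmp
      have hb := aux_measure_bound μ (X n) (hρ n).1 (hρ n).2 h2 hε0 hε1 (hdist n)
      refine le_trans hb ?_
      rw [← ENNReal.ofReal_add (Real.rpow_nonneg (ht0 n).le _)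
        (mul_nonneg (Real.exp_nonneg _) (inv_nonneg.2 (ht0 n).le))]
      exact ENNReal.ofReal_le_ofReal hcmp
    obtain ⟨N, hN⟩ := eventually_atTop.1 hev
    have htot : (∑' n, μ (s n)) ≠ ⊤ := by
      have hle : ∀ n, μ (s n) ≤
          ENNReal.ofReal (2 * (1 / Real.log (1 - ρ n) ^ 2)) +
          (if n < N then 1 else 0) := by
        intro n
        by_cases h : n < N
        · simp only [h, if_true]
          calc μ (s n) ≤ 1 := prob_le_one
            _ ≤ _ := le_add_self
        · simp only [h, if_false, add_zero]
          exact hN n (by omega)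
      have h1 : (∑' n, ENNReal.ofReal (2 * (1 / Real.log (1 - ρ n) ^ 2))) ≠ ⊤ := by
        rw [← ENNReal.ofReal_tsum_of_nonneg (fun n => by positivity)
          (hsum.mul_left 2)]
        exact ENNReal.ofReal_ne_top
      have h2 : (∑' n, (if n < N then (1:ENNReal) else 0)) ≠ ⊤ := by
        rw [tsum_eq_sum (s := Finset.range N)
          (fun n hn => if_neg (Finset.mem_range.not.mp hn))]
        exact (ENNReal.sum_lt_top.2 fun a _ => by
          split <;> simp).ne
      refine ne_top_of_le_ne_top (ENNReal.add_ne_top.2 ⟨h1, h2⟩) ?_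
      calc (∑' n, μ (s n)) ≤ ∑' n, (ENNReal.ofReal (2 * (1 / Real.log (1 - ρ n) ^ 2)) +
            (if n < N then 1 else 0)) := ENNReal.tsum_le_tsum hle
        _ = _ := ENNReal.tsum_add
    have hlimsup := measure_limsup_atTop_eq_zero htot
    filter_upwards [measure_eq_zero_iff_ae_notMem.1 hlimsup] with ω hω
    have hfreq : ¬ ∃ᶠ n in atTop, ω ∈ s n := by
      rwa [← mem_limsup_iff_frequently_mem]
    rw [not_frequently] at hfreq
    filter_upwards [hfreq] with n hn
    exact not_lt.1 hn
  filter_upwards [ae_all_iff.2 key] with ω hω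
  rw [Metric.tendsto_atTop]
  intro δ hδ
  obtain ⟨k, hk⟩ := exists_nat_one_div_lt hδ
  have hkd : ((k:ℝ)+2)⁻¹ < δ := by
    refine lt_of_le_of_lt ?_ hk
    rw [one_div]
    apply inv_anti₀ (by positivity)
    push_cast
    linarith
  obtain ⟨N, hN⟩ := eventually_atTop.1 (hω k)
  refine ⟨N, fun n hn => ?_⟩
  rw [Real.dist_eq]
  exact lt_of_le_of_lt (hN n hn) hkd
end

section
/- Let ρ ∈ (0,1), δ > 0, m ∈ ℕ, and Z_ρ = ln(1-ρ)/ln ρ. Then ∑_{x=1}^∞ (Z_ρ(1+δ) + x)^m ρ^x is asymptotically equivalent to Z_ρ^m (1+δ)^m / (1-ρ) as ρ → 1⁻. -/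
open Filter Set

lemma key_bounds (A ρ : ℝ) (m : ℕ) (hρ0 : 0 < ρ) (hρ1 : ρ < 1) (hA : 0 < A)
    (hr : ρ * Real.exp ((m : ℝ) / A) < 1) :
    ρ ≤ (∑' x : ℕ, (A + ((x : ℝ) + 1)) ^ m * ρ ^ (x + 1)) / (A ^ m / (1 - ρ)) ∧
    (∑' x : ℕ, (A + ((x : ℝ) + 1)) ^ m * ρ ^ (x + 1)) / (A ^ m / (1 - ρ)) ≤
      ρ * Real.exp ((m : ℝ) / A) * (1 - ρ) / (1 - ρ * Real.exp ((m : ℝ) / A)) := by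
  set u : ℝ := Real.exp ((m : ℝ) / A) with hu_def
  set r : ℝ := ρ * u with hr_def
  have hu0 : 0 < u := Real.exp_pos _
  have hu1 : 1 ≤ u := Real.one_le_exp (div_nonneg (Nat.cast_nonneg m) hA.le)
  have hr0 : 0 < r := mul_pos hρ0 hu0
  have h1ρ : 0 < 1 - ρ := by linarith
  have h1r : 0 < 1 - r := by linarith
  have hDpos : 0 < A ^ m / (1 - ρ) := div_pos (pow_pos hA m) h1ρ
  -- pointwise upper bound
  have hle : ∀ x : ℕ, (A + ((x : ℝ) + 1)) ^ m * ρ ^ (x + 1) ≤ A ^ m * r ^ (x + 1) := by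
    intro x
    have hn : (0 : ℝ) ≤ (x : ℝ) + 1 := by positivity
    have h1 : A + ((x : ℝ) + 1) ≤ A * Real.exp (((x : ℝ) + 1) / A) := by
      have := Real.add_one_le_exp (((x : ℝ) + 1) / A)
      calc A + ((x : ℝ) + 1) = A * (((x : ℝ) + 1) / A + 1) := by field_simp; ring
        _ ≤ A * Real.exp (((x : ℝ) + 1) / A) := by
            exact mul_le_mul_of_nonneg_left this hA.le
    have h2 : (A + ((x : ℝ) + 1)) ^ m ≤ (A * Real.exp (((x : ℝ) + 1) / A)) ^ m :=
      pow_le_pow_left₀ (by linarith) h1 m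
    have h3 : (A * Real.exp (((x : ℝ) + 1) / A)) ^ m = A ^ m * u ^ (x + 1) := by
      rw [mul_pow, ← Real.exp_nat_mul, hu_def, ← Real.exp_nat_mul]
      congr 1
      push_cast
      ring
    have h4 : (A + ((x : ℝ) + 1)) ^ m * ρ ^ (x + 1) ≤ A ^ m * u ^ (x + 1) * ρ ^ (x + 1) := by
      apply mul_le_mul_of_nonneg_right _ (pow_nonneg hρ0.le _)
      rw [← h3]; exact h2
    calc (A + ((x : ℝ) + 1)) ^ m * ρ ^ (x + 1) ≤ A ^ m * u ^ (x + 1) * ρ ^ (x + 1) := h4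
      _ = A ^ m * r ^ (x + 1) := by rw [hr_def, mul_pow]; ring
  -- summability
  have hg : Summable (fun x : ℕ => A ^ m * r ^ (x + 1)) := by
    apply Summable.congr ((summable_geometric_of_lt_one hr0.le hr).mul_left (A ^ m * r))
    intro x
    rw [pow_succ]
    ring
  have hf_nonneg : ∀ x : ℕ, 0 ≤ (A + ((x : ℝ) + 1)) ^ m * ρ ^ (x + 1) := by
    intro x
    have : (0:ℝ) ≤ A + ((x:ℝ)+1) := by positivity
    positivity
  have hsf : Summable (fun x : ℕ => (A + ((x : ℝ) + 1)) ^ m * ρ ^ (x + 1)) :=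
    Summable.of_nonneg_of_le hf_nonneg hle hg
  -- upper tsum
  have htg : ∑' x : ℕ, A ^ m * r ^ (x + 1) = A ^ m * r / (1 - r) := by
    have : ∀ x : ℕ, A ^ m * r ^ (x + 1) = (A ^ m * r) * r ^ x := by
      intro x; rw [pow_succ]; ring
    rw [tsum_congr this, tsum_mul_left, tsum_geometric_of_lt_one hr0.le hr, div_eq_mul_inv]
  have hupper : (∑' x : ℕ, (A + ((x : ℝ) + 1)) ^ m * ρ ^ (x + 1)) ≤ A ^ m * r / (1 - r) := by
    rw [← htg]; exact Summable.tsum_le_tsum hle hsf hg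
  -- lower tsum
  have hlow_pt : ∀ x : ℕ, A ^ m * ρ ^ (x + 1) ≤ (A + ((x : ℝ) + 1)) ^ m * ρ ^ (x + 1) := by
    intro x
    apply mul_le_mul_of_nonneg_right _ (pow_nonneg hρ0.le _)
    exact pow_le_pow_left₀ hA.le (le_add_of_nonneg_right (by positivity)) m
  have hgl : Summable (fun x : ℕ => A ^ m * ρ ^ (x + 1)) := by
    apply Summable.congr ((summable_geometric_of_lt_one hρ0.le hρ1).mul_left (A ^ m * ρ))
    intro x; rw [pow_succ]; ring
  have htl : ∑' x : ℕ, A ^ m * ρ ^ (x + 1) = A ^ m * ρ / (1 - ρ) := by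
    have : ∀ x : ℕ, A ^ m * ρ ^ (x + 1) = (A ^ m * ρ) * ρ ^ x := by
      intro x; rw [pow_succ]; ring
    rw [tsum_congr this, tsum_mul_left, tsum_geometric_of_lt_one hρ0.le hρ1, div_eq_mul_inv]
  have hlower : A ^ m * ρ / (1 - ρ) ≤ ∑' x : ℕ, (A + ((x : ℝ) + 1)) ^ m * ρ ^ (x + 1) := by
    rw [← htl]; exact Summable.tsum_le_tsum hlow_pt hgl hsf
  constructor
  · rw [le_div_iff₀ hDpos]
    calc ρ * (A ^ m / (1 - ρ)) = A ^ m * ρ / (1 - ρ) := by ring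
      _ ≤ _ := hlower
  · rw [div_le_iff₀ hDpos]
    calc (∑' x : ℕ, (A + ((x : ℝ) + 1)) ^ m * ρ ^ (x + 1)) ≤ A ^ m * r / (1 - r) := hupper
      _ = r * (1 - ρ) / (1 - r) * (A ^ m / (1 - ρ)) := by
          field_simp
open Filter Set

lemma neg_log_tendsto : Tendsto (fun ρ : ℝ => -Real.log (1 - ρ)) (nhdsWithin 1 (Iio 1)) atTop := by
  have h1 : Tendsto (fun ρ : ℝ => 1 - ρ) (nhdsWithin 1 (Iio 1)) (nhdsWithin 0 (Ioi 0)) := by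
    rw [tendsto_nhdsWithin_iff]
    constructor
    · have h : Tendsto (fun ρ : ℝ => 1 - ρ) (nhds 1) (nhds (1 - 1)) := tendsto_id.const_sub 1
      rw [sub_self] at h
      exact h.mono_left nhdsWithin_le_nhds
    · filter_upwards [self_mem_nhdsWithin] with ρ (hρ : ρ < 1)
      exact sub_pos.mpr hρ
  exact tendsto_neg_atBot_atTop.comp (Real.tendsto_log_nhdsGT_zero.comp h1)

lemma Z_tendsto : Tendsto (fun ρ : ℝ => Real.log (1 - ρ) / Real.log ρ)
    (nhdsWithin 1 (Iio 1)) atTop := by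
  have hden : Tendsto (fun ρ : ℝ => (-Real.log ρ)⁻¹) (nhdsWithin 1 (Iio 1)) atTop := by
    apply Filter.Tendsto.inv_tendsto_nhdsGT_zero
    rw [tendsto_nhdsWithin_iff]
    constructor
    · have h : Tendsto (fun ρ : ℝ => -Real.log ρ) (nhds 1) (nhds (-Real.log 1)) :=
        ((Real.continuousAt_log one_ne_zero).tendsto).neg
      rw [Real.log_one, neg_zero] at h
      exact h.mono_left nhdsWithin_le_nhds
    · have h01 : ∀ᶠ ρ : ℝ in nhdsWithin 1 (Iio 1), 0 < ρ :=
        (eventually_gt_nhds one_pos).filter_mono nhdsWithin_le_nhds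
      filter_upwards [self_mem_nhdsWithin, h01] with ρ (hρ : ρ < 1) hρ0
      exact mem_Ioi.mpr (by simpa using Real.log_neg hρ0 hρ)
  apply (neg_log_tendsto.atTop_mul_atTop₀ hden).congr
  intro ρ
  rw [inv_neg, div_eq_mul_inv]
  ring

lemma ratio_tendsto : Tendsto (fun ρ : ℝ => (1 - ρ) / (-Real.log ρ))
    (nhdsWithin 1 (Iio 1)) (nhds 1) := by
  have h : Tendsto (fun x : ℝ => Real.log x / (x - 1)) (nhdsWithin 1 {(1:ℝ)}ᶜ) (nhds 1) := by
    have h := (Real.hasDerivAt_log one_ne_zero)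
    rw [hasDerivAt_iff_tendsto_slope] at h
    simp only [slope_fun_def, Real.log_one, sub_zero, inv_one] at h
    convert h using 2 with x
    simp [div_eq_mul_inv, mul_comm]
  have h2 : Tendsto (fun x : ℝ => Real.log x / (x - 1)) (nhdsWithin 1 (Iio 1)) (nhds 1) :=
    h.mono_left (nhdsWithin_mono 1 (fun x hx => ne_of_lt hx))
  have h3 := h2.inv₀ one_ne_zero
  rw [inv_one] at h3
  apply h3.congr
  intro ρ
  rw [inv_div, div_neg, ← neg_div, neg_sub]

lemma ZB_tendsto : Tendsto (fun ρ : ℝ => Real.log (1 - ρ) / Real.log ρ * (1 - ρ))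
    (nhdsWithin 1 (Iio 1)) atTop := by
  apply (Filter.Tendsto.atTop_mul_pos one_pos neg_log_tendsto ratio_tendsto).congr
  intro ρ
  rw [div_neg, div_eq_mul_inv, div_eq_mul_inv]
  ring

theorem shifted_moment_sum_asymptotic (δ : ℝ) (hδ : 0 < δ) (m : ℕ) :
    Tendsto
      (fun ρ : ℝ =>
        (∑' x : ℕ,
            (Real.log (1 - ρ) / Real.log ρ * (1 + δ) + ((x : ℝ) + 1)) ^ m * ρ ^ (x + 1)) /
          ((Real.log (1 - ρ) / Real.log ρ) ^ m * (1 + δ) ^ m / (1 - ρ)))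
      (nhdsWithin 1 (Set.Iio 1)) (nhds 1) := by
  have hδ1 : (0:ℝ) < 1 + δ := by linarith
  set l := nhdsWithin (1:ℝ) (Set.Iio 1) with hl
  set A : ℝ → ℝ := fun ρ => Real.log (1 - ρ) / Real.log ρ * (1 + δ) with hA_def
  set u : ℝ → ℝ := fun ρ => Real.exp ((m : ℝ) / A ρ) with hu_def
  -- basic limits
  have hρ0 : ∀ᶠ ρ : ℝ in l, 0 < ρ := (eventually_gt_nhds one_pos).filter_mono nhdsWithin_le_nhds
  have hρ1 : ∀ᶠ ρ : ℝ in l, ρ < 1 := by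
    filter_upwards [self_mem_nhdsWithin] with ρ (hρ : ρ < 1) using hρ
  have hA : Tendsto A l atTop := Z_tendsto.atTop_mul_const hδ1
  have hB : Tendsto (fun ρ => A ρ * (1 - ρ)) l atTop := by
    apply (ZB_tendsto.atTop_mul_const hδ1).congr
    intro ρ; simp only [hA_def]; ring
  have hApos : ∀ᶠ ρ in l, 0 < A ρ := hA.eventually_gt_atTop 0
  have hmA : Tendsto (fun ρ => (m : ℝ) / A ρ) l (nhds 0) := tendsto_const_nhds.div_atTop hA
  have hmB : Tendsto (fun ρ => (m : ℝ) / (A ρ * (1 - ρ))) l (nhds 0) :=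
    tendsto_const_nhds.div_atTop hB
  have hu : Tendsto u l (nhds 1) := by
    have h := (Real.continuous_exp.tendsto 0).comp hmA
    rw [Real.exp_zero] at h
    simpa [hu_def, Function.comp_def] using h
  have hρten : Tendsto (fun ρ : ℝ => ρ) l (nhds 1) :=
    (tendsto_id : Tendsto id (nhds (1:ℝ)) (nhds 1)).mono_left nhdsWithin_le_nhds
  -- eventually ρ * u ρ < 1
  have hmB1 : ∀ᶠ ρ in l, (m : ℝ) / (A ρ * (1 - ρ)) < 1 := hmB.eventually_lt_const one_pos
  have hr1 : ∀ᶠ ρ in l, ρ * u ρ < 1 := by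
    filter_upwards [hρ0, hρ1, hApos, hmB1] with ρ h0 h1 hAp hm1
    have h1ρ : 0 < 1 - ρ := by linarith
    have hmA' : (m : ℝ) / A ρ < 1 - ρ := by
      have heq : (m : ℝ) / A ρ = ((m : ℝ) / (A ρ * (1 - ρ))) * (1 - ρ) := by
        field_simp
      rw [heq]
      calc ((m : ℝ) / (A ρ * (1 - ρ))) * (1 - ρ) < 1 * (1 - ρ) :=
            mul_lt_mul_of_pos_right hm1 h1ρ
        _ = 1 - ρ := one_mul _
    have hlog : 1 - ρ ≤ -Real.log ρ := by
      have := Real.log_le_sub_one_of_pos h0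
      linarith
    have hexp : u ρ < ρ⁻¹ := by
      rw [hu_def]
      calc Real.exp ((m : ℝ) / A ρ) < Real.exp (-Real.log ρ) :=
            Real.exp_lt_exp.mpr (by linarith)
        _ = ρ⁻¹ := by rw [Real.exp_neg, Real.exp_log h0]
    calc ρ * u ρ < ρ * ρ⁻¹ := mul_lt_mul_of_pos_left hexp h0
      _ = 1 := mul_inv_cancel₀ h0.ne'
  -- w → 0
  have hw : Tendsto (fun ρ => (u ρ - 1) / (1 - ρ)) l (nhds 0) := by
    have hupperT : Tendsto (fun ρ => ((m : ℝ) / (A ρ * (1 - ρ))) * u ρ) l (nhds 0) := by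
      have := hmB.mul hu
      simpa using this
    apply tendsto_of_tendsto_of_tendsto_of_le_of_le' tendsto_const_nhds hupperT
    · filter_upwards [hρ1, hApos] with ρ h1 hAp
      have h1ρ : 0 < 1 - ρ := by linarith
      have hu1 : 1 ≤ u ρ := Real.one_le_exp (div_nonneg (Nat.cast_nonneg m) hAp.le)
      exact div_nonneg (by linarith) h1ρ.le
    · filter_upwards [hρ1, hApos] with ρ h1 hAp
      have h1ρ : 0 < 1 - ρ := by linarith
      have key : u ρ - 1 ≤ ((m : ℝ) / A ρ) * u ρ := by
        have h2 := Real.add_one_le_exp (-((m : ℝ) / A ρ))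
        have h3 : Real.exp (-((m : ℝ) / A ρ)) = (u ρ)⁻¹ := by
          rw [hu_def, Real.exp_neg]
        rw [h3] at h2
        have hu0 : 0 < u ρ := Real.exp_pos _
        have := mul_le_mul_of_nonneg_right h2 hu0.le
        rw [inv_mul_cancel₀ hu0.ne'] at this
        nlinarith
      calc (u ρ - 1) / (1 - ρ) ≤ (((m : ℝ) / A ρ) * u ρ) / (1 - ρ) :=
            div_le_div_of_nonneg_right key h1ρ.le
        _ = ((m : ℝ) / (A ρ * (1 - ρ))) * u ρ := by field_simp
  -- denominator ratio → 1
  have hDen : Tendsto (fun ρ => (1 - ρ * u ρ) / (1 - ρ)) l (nhds 1) := by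
    have h : Tendsto (fun ρ => 1 - ρ * ((u ρ - 1) / (1 - ρ))) l (nhds (1 - 1 * 0)) :=
      (tendsto_const_nhds (x := (1:ℝ))).sub (hρten.mul hw)
    have h1 : (1 : ℝ) - 1 * 0 = 1 := by norm_num
    rw [h1] at h
    apply h.congr'
    filter_upwards [hρ1] with ρ hlt
    have h1ρ : (1 : ℝ) - ρ ≠ 0 := by intro hc; linarith
    field_simp
    ring
  -- upper bound tendsto
  have hU : Tendsto (fun ρ => ρ * u ρ * (1 - ρ) / (1 - ρ * u ρ)) l (nhds 1) := by
    have h := (hρten.mul hu).div hDen one_ne_zero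
    have : (1 : ℝ) * 1 / 1 = 1 := by norm_num
    rw [this] at h
    apply h.congr
    intro ρ
    simp only [Pi.div_apply]
    rw [div_div_eq_mul_div]
  -- squeeze
  apply tendsto_of_tendsto_of_tendsto_of_le_of_le' hρten hU
  · filter_upwards [hρ0, hρ1, hApos, hr1] with ρ h0 h1 hAp hr
    have := (key_bounds (A ρ) ρ m h0 h1 hAp hr).1
    rw [hA_def] at this
    rw [← mul_pow]
    convert this using 2
  · filter_upwards [hρ0, hρ1, hApos, hr1] with ρ h0 h1 hAp hr
    have := (key_bounds (A ρ) ρ m h0 h1 hAp hr).2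
    rw [hA_def] at this
    rw [← mul_pow]
    convert this using 2
end

section
/- Fix δ ∈ (0,1) and for ρ ∈ (0,1) let Z = ln(1-ρ)/ln ρ (assume Z(1-δ) is a positive integer). Then Q(ρ) = ∏_{j=0}^{Z(1-δ)-1} (1 - ρ^{Z(1-δ)+j}) satisfies lim_{ρ→1⁻} Q(ρ) = 0. -/
open Filter Set Finset

theorem near_frogs_reach (δ : ℝ) (hδ : 0 < δ) (hδ1 : δ < 1) :
    Tendsto
      (fun ρ : ℝ =>
        ∏ j ∈ Finset.range ⌊Real.log (1 - ρ) / Real.log ρ * (1 - δ)⌋₊,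
          (1 - ρ ^ (Real.log (1 - ρ) / Real.log ρ * (1 - δ) + (j : ℝ))))
      (nhdsWithin 1 (Set.Iio 1)) (nhds 0) := by
  set l := nhdsWithin (1:ℝ) (Set.Iio 1) with hl
  have hmem : ∀ᶠ ρ : ℝ in l, ρ ∈ Ioo (1/2 : ℝ) 1 :=
    Ioo_mem_nhdsLT_of_mem ⟨by norm_num, le_refl 1⟩
  -- 1 - ρ tends to 0 within Ioi 0
  have hsub : Tendsto (fun ρ : ℝ => 1 - ρ) l (nhdsWithin 0 (Ioi 0)) := by
    apply tendsto_nhdsWithin_of_tendsto_nhds_of_eventually_within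
    · have : Tendsto (fun ρ : ℝ => 1 - ρ) (nhds 1) (nhds (1 - 1)) :=
        (continuous_const.sub continuous_id).tendsto 1
      simpa using this.mono_left nhdsWithin_le_nhds
    · filter_upwards [self_mem_nhdsWithin] with ρ (hρ : ρ < 1)
      simpa using hρ
  -- (1-ρ)^(-δ) tends to atTop
  have hrpow : Tendsto (fun ρ : ℝ => (1 - ρ) ^ (-δ)) l atTop := by
    have h2 : Tendsto (fun u : ℝ => u ^ (-δ)) (nhdsWithin 0 (Ioi 0)) atTop := by
      have h3 := (tendsto_rpow_atTop hδ).comp tendsto_inv_nhdsGT_zero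
      apply h3.congr'
      filter_upwards [self_mem_nhdsWithin] with u (hu : 0 < u)
      simp only [Function.comp]
      rw [← Real.rpow_neg_one u, ← Real.rpow_mul hu.le]
      norm_num
    exact h2.comp hsub
  -- upper bound function tends to 0
  have hU : Tendsto (fun ρ : ℝ => Real.exp (-(1/2 * (1 - ρ) ^ (-δ)))) l (nhds 0) := by
    apply Real.tendsto_exp_atBot.comp
    apply (tendsto_neg_atTop_atBot).comp
    exact hrpow.const_mul_atTop (by norm_num)
  -- eventually (1-ρ)^(1-δ)/ρ ≤ 1/2
  have hsmall : ∀ᶠ ρ : ℝ in l, (1 - ρ) ^ (1 - δ) / ρ < 1/2 := by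
    have hnum : Tendsto (fun ρ : ℝ => (1 - ρ) ^ (1 - δ)) l (nhds 0) := by
      have hc : ContinuousAt (fun x : ℝ => x ^ (1 - δ)) 0 :=
        Real.continuousAt_rpow_const 0 (1 - δ) (Or.inr (by linarith))
      have := hc.tendsto.comp (hsub.mono_right nhdsWithin_le_nhds)
      rwa [Real.zero_rpow (ne_of_gt (by linarith : (0:ℝ) < 1 - δ))] at this
    have hden : Tendsto (fun ρ : ℝ => ρ) l (nhds 1) :=
      tendsto_id.mono_left nhdsWithin_le_nhds
    have := hnum.div hden one_ne_zero
    simp only [zero_div] at this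
    exact this.eventually_lt_const (by norm_num)
  -- main squeeze
  apply tendsto_of_tendsto_of_tendsto_of_le_of_le' tendsto_const_nhds hU
  · -- nonnegativity
    filter_upwards [hmem] with ρ hρ
    obtain ⟨hρh, hρ1⟩ := hρ
    have hρ0 : (0:ℝ) < ρ := by linarith
    have h1ρ : (0:ℝ) < 1 - ρ := by linarith
    have hlogρ : Real.log ρ < 0 := Real.log_neg hρ0 hρ1
    have hlog1ρ : Real.log (1 - ρ) ≤ 0 := Real.log_nonpos h1ρ.le (by linarith)
    have hAnn : 0 ≤ Real.log (1 - ρ) / Real.log ρ * (1 - δ) := by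
      apply mul_nonneg _ (by linarith)
      exact div_nonneg_of_nonpos hlog1ρ hlogρ.le
    apply Finset.prod_nonneg
    intro j _
    have : ρ ^ (Real.log (1 - ρ) / Real.log ρ * (1 - δ) + (j:ℝ)) ≤ 1 :=
      Real.rpow_le_one hρ0.le hρ1.le (by positivity)
    linarith
  · -- upper bound
    filter_upwards [hmem, hsmall] with ρ hρ hsm
    obtain ⟨hρh, hρ1⟩ := hρ
    have hρ0 : (0:ℝ) < ρ := by linarith
    have h1ρ : (0:ℝ) < 1 - ρ := by linarith
    have hlogρ : Real.log ρ < 0 := Real.log_neg hρ0 hρ1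
    set A := Real.log (1 - ρ) / Real.log ρ * (1 - δ) with hAdef
    set N := ⌊A⌋₊ with hN
    -- ρ ^ A = (1-ρ)^(1-δ)
    have hZ : ρ ^ (Real.log (1 - ρ) / Real.log ρ) = 1 - ρ := by
      rw [Real.rpow_def_of_pos hρ0, mul_comm, div_mul_cancel₀ _ hlogρ.ne, Real.exp_log h1ρ]
    have hρA : ρ ^ A = (1 - ρ) ^ (1 - δ) := by
      rw [hAdef, Real.rpow_mul hρ0.le, hZ]
    -- step 1: product ≤ exp(-S)
    have hprod_le : (∏ j ∈ Finset.range N, (1 - ρ ^ (A + (j:ℝ)))) ≤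
        Real.exp (-(∑ j ∈ Finset.range N, ρ ^ (A + (j:ℝ)))) := by
      have hAnn : 0 ≤ A := by
        rw [hAdef]
        apply mul_nonneg _ (by linarith)
        exact div_nonneg_of_nonpos
          (Real.log_nonpos h1ρ.le (by linarith)) hlogρ.le
      calc (∏ j ∈ Finset.range N, (1 - ρ ^ (A + (j:ℝ))))
          ≤ ∏ j ∈ Finset.range N, Real.exp (-(ρ ^ (A + (j:ℝ)))) := by
            apply Finset.prod_le_prod
            · intro j _
              have : ρ ^ (A + (j:ℝ)) ≤ 1 :=
                Real.rpow_le_one hρ0.le hρ1.le (by positivity)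
              linarith
            · intro j _
              have := Real.add_one_le_exp (-(ρ ^ (A + (j:ℝ))))
              linarith
        _ = Real.exp (-(∑ j ∈ Finset.range N, ρ ^ (A + (j:ℝ)))) := by
            rw [← Real.exp_sum, Finset.sum_neg_distrib]
    -- step 2: evaluate S
    have hS : (∑ j ∈ Finset.range N, ρ ^ (A + (j:ℝ))) =
        (1 - ρ) ^ (-δ) * (1 - ρ ^ N) := by
      have : ∀ j ∈ Finset.range N, ρ ^ (A + (j:ℝ)) = ρ ^ A * ρ ^ j := by
        intro j _
        rw [Real.rpow_add hρ0, Real.rpow_natCast]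
      rw [Finset.sum_congr rfl this, ← Finset.mul_sum, geom_sum_eq hρ1.ne, hρA]
      have hρne : ρ - 1 ≠ 0 := by linarith
      have h1ρne : (1:ℝ) - ρ ≠ 0 := by linarith
      have hsplit : (1 - ρ) ^ (1 - δ) = (1 - ρ) ^ (-δ) * (1 - ρ) := by
        rw [← Real.rpow_add_one h1ρne, show -δ + 1 = 1 - δ by ring]
      rw [hsplit]
      field_simp
      ring
    -- step 3: ρ^N ≤ 1/2
    have hρN : (ρ:ℝ) ^ N ≤ 1/2 := by
      have h1 : (ρ:ℝ) ^ N = ρ ^ ((N:ℝ)) := (Real.rpow_natCast ρ N).symm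
      have h2 : ρ ^ ((N:ℝ)) ≤ ρ ^ (A - 1) :=
        Real.rpow_le_rpow_of_exponent_ge hρ0 hρ1.le (le_of_lt (Nat.sub_one_lt_floor A))
      have h3 : ρ ^ (A - 1) = (1 - ρ) ^ (1 - δ) / ρ := by
        rw [Real.rpow_sub hρ0, Real.rpow_one, hρA]
      rw [h1]
      calc ρ ^ ((N:ℝ)) ≤ ρ ^ (A - 1) := h2
        _ = (1 - ρ) ^ (1 - δ) / ρ := h3
        _ ≤ 1/2 := hsm.le
    -- step 4: S ≥ 1/2 * (1-ρ)^(-δ)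
    have hSlb : 1/2 * (1 - ρ) ^ (-δ) ≤ (∑ j ∈ Finset.range N, ρ ^ (A + (j:ℝ))) := by
      rw [hS]
      have hpos : (0:ℝ) < (1 - ρ) ^ (-δ) := Real.rpow_pos_of_pos h1ρ _
      have : (1/2 : ℝ) ≤ 1 - ρ ^ N := by linarith
      calc 1/2 * (1 - ρ) ^ (-δ) = (1 - ρ) ^ (-δ) * (1/2) := by ring
        _ ≤ (1 - ρ) ^ (-δ) * (1 - ρ ^ N) := by
            apply mul_le_mul_of_nonneg_left this hpos.le
    calc (∏ j ∈ Finset.range N, (1 - ρ ^ (A + (j:ℝ))))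
        ≤ Real.exp (-(∑ j ∈ Finset.range N, ρ ^ (A + (j:ℝ)))) := hprod_le
      _ ≤ Real.exp (-(1/2 * (1 - ρ) ^ (-δ))) := by
          apply Real.exp_le_exp.mpr
          linarith
end
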